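/- arXiv:2505.21217 — 4 statements merged into one kernel-verified Lean document; each statement's English description precedes it below -/
import Mathlib

section
/- For every Borel set E ⊆ ℝ^d, the upper correlation dimension satisfies ucod E = sup{ s ≥ 0 : there exist μ ∈ 𝒫(E) and a sequence r_k decreasing to 0 such that μ(B(x,r_k)) ≤ r_k^s for all x ∈ ℝ^d and all k ∈ ℕ }. -/
open MeasureTheory Metric Filter Set Topology
open scoped ENNReal NNReal

/-- The topological support of a measure: points all of whose neighbourhoods
have positive measure. -/
def msupport {X : Type*} [TopologicalSpace X] [MeasurableSpace X]
    (μ : Measure X) : Set X :=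
  {x | ∀ U : Set X, IsOpen U → x ∈ U → μ U ≠ 0}

/-- The collection of Borel probability measures whose support is contained in `E`. -/
def probOn {X : Type*} [TopologicalSpace X] [MeasurableSpace X]
    (E : Set X) : Set (Measure X) :=
  {μ | IsProbabilityMeasure μ ∧ msupport μ ⊆ E}

/-- The correlation integral `∫ μ(B(x,r)) dμ(x)` (as a real number). -/
noncomputable def corrInt {X : Type*} [MetricSpace X] [MeasurableSpace X]
    (μ : Measure X) (r : ℝ) : ℝ :=
  (∫⁻ x, μ (closedBall x r) ∂μ).toReal

/-- Lower correlation dimension of a measure. -/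
noncomputable def lcod {X : Type*} [MetricSpace X] [MeasurableSpace X]
    (μ : Measure X) : ℝ :=
  liminf (fun r : ℝ => Real.log (corrInt μ r) / Real.log r) (𝓝[>] 0)

/-- Upper correlation dimension of a measure. -/
noncomputable def ucod {X : Type*} [MetricSpace X] [MeasurableSpace X]
    (μ : Measure X) : ℝ :=
  limsup (fun r : ℝ => Real.log (corrInt μ r) / Real.log r) (𝓝[>] 0)

/-- Upper correlation dimension of a set. -/
noncomputable def ucodSet {X : Type*} [MetricSpace X] [MeasurableSpace X]
    (E : Set X) : ℝ :=
  sSup (ucod '' probOn E)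

/-- `coverNum E r` is the least number of sets of diameter at most `r` needed to cover `E`. -/
noncomputable def coverNum {X : Type*} [MetricSpace X] (E : Set X) (r : ℝ) : ℕ :=
  sInf {n : ℕ | ∃ 𝒰 : Finset (Set X), 𝒰.card = n ∧
    (∀ U ∈ 𝒰, EMetric.diam U ≤ ENNReal.ofReal r) ∧ E ⊆ ⋃ U ∈ 𝒰, U}

/-- Lower box-counting dimension. -/
noncomputable def lbd {X : Type*} [MetricSpace X] (E : Set X) : ℝ :=
  liminf (fun r : ℝ => Real.log (coverNum E r : ℝ) / (-Real.log r)) (𝓝[>] 0)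

/-- Upper box-counting dimension. -/
noncomputable def ubd {X : Type*} [MetricSpace X] (E : Set X) : ℝ :=
  limsup (fun r : ℝ => Real.log (coverNum E r : ℝ) / (-Real.log r)) (𝓝[>] 0)

/-- Modified lower box dimension. -/
noncomputable def mlbd {X : Type*} [MetricSpace X] (E : Set X) : ℝ :=
  sInf {s : ℝ | ∃ F : ℕ → Set X, (∀ i, IsCompact (F i)) ∧ E ⊆ ⋃ i, F i ∧
    ∀ i, lbd (F i) ≤ s}

/-- Modified upper box dimension (= packing dimension). -/
noncomputable def mubd {X : Type*} [MetricSpace X] (E : Set X) : ℝ :=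
  sInf {s : ℝ | ∃ F : ℕ → Set X, (∀ i, IsCompact (F i)) ∧ E ⊆ ⋃ i, F i ∧
    ∀ i, ubd (F i) ≤ s}

/-- Fourier transform of a measure on Euclidean space. -/
noncomputable def ftMeas {d : ℕ} (μ : Measure (EuclideanSpace ℝ (Fin d)))
    (z : EuclideanSpace ℝ (Fin d)) : ℂ :=
  ∫ x, Complex.exp (Complex.I * (inner ℝ x z : ℝ)) ∂μ


variable {X : Type*} [MetricSpace X] [MeasurableSpace X] [OpensMeasurableSpace X]
  [SecondCountableTopology X]

lemma distSet_meas (r : ℝ) : MeasurableSet {p : X × X | dist p.1 p.2 ≤ r} :=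
  (isClosed_le (continuous_dist.comp (continuous_fst.prodMk continuous_snd)) continuous_const).measurableSet

omit [MeasurableSpace X] [OpensMeasurableSpace X] [SecondCountableTopology X] in
lemma cball_eq' (x : X) (r : ℝ) : {a : X | dist x a ≤ r} = closedBall x r := by
  ext y; simp [dist_comm]

lemma meas_cball (μ : Measure X) [SFinite μ] (r : ℝ) :
    Measurable fun x => μ (closedBall x r) := by
  have := measurable_measure_prodMk_left (ν := μ) (distSet_meas (X := X) r)
  simpa [Set.preimage, cball_eq'] using this

lemma lint_swap (μ ν : Measure X) [SFinite μ] [SFinite ν] (r : ℝ) :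
    ∫⁻ x, ν (closedBall x r) ∂μ = ∫⁻ y, μ (closedBall y r) ∂ν := by
  have h1 : ∫⁻ x, ν (closedBall x r) ∂μ = (μ.prod ν) {p : X × X | dist p.1 p.2 ≤ r} := by
    rw [Measure.prod_apply (distSet_meas r)]
    simp only [Set.preimage, Set.mem_setOf_eq, cball_eq']
  have h2 : ∫⁻ y, μ (closedBall y r) ∂ν = (ν.prod μ) {p : X × X | dist p.1 p.2 ≤ r} := by
    rw [Measure.prod_apply (distSet_meas r)]
    simp only [Set.preimage, Set.mem_setOf_eq, cball_eq']
  rw [h1, h2, ← Measure.prod_swap,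
    Measure.map_apply measurable_swap (distSet_meas r)]
  congr 1; ext p; simp [dist_comm]

-- pigeonhole
lemma exists_big_ball {d : ℕ} (μ : Measure (EuclideanSpace ℝ (Fin d)))
    [IsProbabilityMeasure μ] :
    ∃ c : ℝ, 0 < c ∧ ∀ r : ℝ, 0 < r → r ≤ 1 →
      ∃ x, ENNReal.ofReal (c * r ^ d) ≤ μ (closedBall x r) := by
  -- choose R with μ (closedBall 0 R) ≥ 1/2
  obtain ⟨R, hR1, hRμ⟩ : ∃ R : ℝ, 1 ≤ R ∧ (2⁻¹ : ℝ≥0∞) ≤ μ (closedBall 0 R) := by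
    have hu : (⋃ n : ℕ, closedBall (0 : EuclideanSpace ℝ (Fin d)) n) = univ := by
      ext x; simp only [mem_iUnion, mem_closedBall, dist_zero_right, mem_univ, iff_true]
      obtain ⟨n, hn⟩ := exists_nat_ge (‖x‖)
      exact ⟨n, hn⟩
    have hmono : Monotone fun n : ℕ => closedBall (0 : EuclideanSpace ℝ (Fin d)) n :=
      fun m n h => closedBall_subset_closedBall (by exact_mod_cast h)
    have : (1 : ℝ≥0∞) = ⨆ n : ℕ, μ (closedBall 0 n) := by
      rw [← hmono.measure_iUnion, hu, measure_univ]
    have hlt : (2⁻¹ : ℝ≥0∞) < ⨆ n : ℕ, μ (closedBall 0 n) := by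
      rw [← this]; norm_num
    obtain ⟨n, hn⟩ := lt_iSup_iff.1 hlt
    refine ⟨max n 1, le_max_right _ _, le_trans hn.le (measure_mono ?_)⟩
    exact closedBall_subset_closedBall (le_max_left _ _)
  set A := closedBall (0 : EuclideanSpace ℝ (Fin d)) (R + 1) with hA
  set v := volume (ball (0 : EuclideanSpace ℝ (Fin d)) 1) with hv
  set V := volume A with hV
  have hvpos : 0 < v := measure_ball_pos _ _ one_pos
  have hvne : v ≠ ∞ := measure_ball_lt_top.ne
  have hVpos : 0 < V := measure_closedBall_pos _ _ (by linarith)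
  have hVne : V ≠ ∞ := measure_closedBall_lt_top.ne
  set vR := v.toReal with hvR
  set VR := V.toReal with hVR
  have hvRpos : 0 < vR := ENNReal.toReal_pos hvpos.ne' hvne
  have hVRpos : 0 < VR := ENNReal.toReal_pos hVpos.ne' hVne
  refine ⟨vR / (4 * VR), by positivity, fun r hr hr1 => ?_⟩
  by_contra hcon
  push_neg at hcon
  have hrd : (0:ℝ) < r ^ d := pow_pos hr d
  -- closed ball measure formula
  have hform : ∀ y : EuclideanSpace ℝ (Fin d),
      volume (closedBall y r) = ENNReal.ofReal (r ^ d) * v := by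
    intro y
    rw [hv, Measure.addHaar_closedBall volume y hr.le, finrank_euclideanSpace_fin]
  -- key quantity
  set L := ∫⁻ y, (volume.restrict A) (closedBall y r) ∂μ with hL
  have hswap : L = ∫⁻ x, μ (closedBall x r) ∂(volume.restrict A) :=
    (lint_swap (volume.restrict A) μ r).symm
  -- lower bound
  have hlow : ENNReal.ofReal (r ^ d) * v * 2⁻¹ ≤ L := by
    have hsub : ∀ y ∈ closedBall (0 : EuclideanSpace ℝ (Fin d)) R,
        closedBall y r ⊆ A := by
      intro y hy z hz
      rw [mem_closedBall] at hy hz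
      have := dist_triangle z y (0 : EuclideanSpace ℝ (Fin d))
      rw [hA, mem_closedBall]
      linarith
    have h1 : ∀ y ∈ closedBall (0 : EuclideanSpace ℝ (Fin d)) R,
        ENNReal.ofReal (r ^ d) * v ≤ (volume.restrict A) (closedBall y r) := by
      intro y hy
      rw [hA, Measure.restrict_apply' measurableSet_closedBall,
        Set.inter_eq_left.2 (by rw [← hA]; exact hsub y hy), hform y]
    calc ENNReal.ofReal (r ^ d) * v * 2⁻¹
        ≤ ENNReal.ofReal (r ^ d) * v * μ (closedBall 0 R) := by
          exact mul_le_mul_right hRμ _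
      _ = ∫⁻ _ in closedBall (0 : EuclideanSpace ℝ (Fin d)) R,
            (ENNReal.ofReal (r ^ d) * v) ∂μ := by
          rw [setLIntegral_const]
      _ ≤ ∫⁻ y in closedBall (0 : EuclideanSpace ℝ (Fin d)) R,
            (volume.restrict A) (closedBall y r) ∂μ := by
          exact setLIntegral_mono (meas_cball _ r) h1
      _ ≤ L := by
          rw [hL]; exact setLIntegral_le_lintegral _ _
  -- upper bound
  have hup : L ≤ ENNReal.ofReal (vR / (4 * VR) * r ^ d) * V := by
    rw [hswap]
    calc ∫⁻ x in A, μ (closedBall x r)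
        ≤ ∫⁻ _ in A, ENNReal.ofReal (vR / (4 * VR) * r ^ d) :=
          lintegral_mono fun x => (hcon x).le
      _ = ENNReal.ofReal (vR / (4 * VR) * r ^ d) * V := by
          rw [setLIntegral_const, ← hV]
  -- combine and derive contradiction
  have hchain : ENNReal.ofReal (r ^ d * vR * 2⁻¹) ≤ ENNReal.ofReal (vR / (4 * VR) * r ^ d * VR) := by
    calc ENNReal.ofReal (r ^ d * vR * 2⁻¹)
        = ENNReal.ofReal (r ^ d) * v * 2⁻¹ := by
          have hhalf : ENNReal.ofReal ((2:ℝ)⁻¹) = 2⁻¹ := by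
            rw [ENNReal.ofReal_inv_of_pos (by norm_num)]
            norm_num
          rw [ENNReal.ofReal_mul (by positivity), ENNReal.ofReal_mul (by positivity),
            hhalf, hvR, ENNReal.ofReal_toReal hvne]
      _ ≤ L := hlow
      _ ≤ ENNReal.ofReal (vR / (4 * VR) * r ^ d) * V := hup
      _ = ENNReal.ofReal (vR / (4 * VR) * r ^ d * VR) := by
          conv_rhs => rw [ENNReal.ofReal_mul (by positivity)]
          rw [hVR, ENNReal.ofReal_toReal hVne]
  have hreal : r ^ d * vR * 2⁻¹ ≤ vR / (4 * VR) * r ^ d * VR :=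
    (ENNReal.ofReal_le_ofReal_iff (by positivity)).1 hchain
  have : vR / (4 * VR) * r ^ d * VR = r ^ d * vR / 4 := by
    field_simp
  rw [this] at hreal
  nlinarith

variable {d : ℕ} (μ : Measure (EuclideanSpace ℝ (Fin d))) [IsProbabilityMeasure μ]

lemma lint_le_one (r : ℝ) : ∫⁻ x, μ (closedBall x r) ∂μ ≤ 1 := by
  calc ∫⁻ x, μ (closedBall x r) ∂μ ≤ ∫⁻ _, 1 ∂μ := lintegral_mono fun x => prob_le_one
    _ = 1 := by simp

lemma corrInt_le_one (r : ℝ) : corrInt μ r ≤ 1 := by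
  rw [corrInt]
  exact le_trans (ENNReal.toReal_mono ENNReal.one_ne_top (lint_le_one μ r)) (by simp)

lemma corr_lb : ∃ c : ℝ, 0 < c ∧ c ≤ 1 ∧ ∀ r : ℝ, 0 < r → r ≤ 1 →
    c * r ^ (2 * d) ≤ corrInt μ r := by
  obtain ⟨c₀, hc₀, hbig⟩ := exists_big_ball μ
  refine ⟨min 1 (c₀ ^ 2 / 4 ^ d), by positivity, min_le_left _ _, fun r hr hr1 => ?_⟩
  have hr2 : 0 < r / 2 := by linarith
  have hr21 : r / 2 ≤ 1 := by linarith
  obtain ⟨z, hz⟩ := hbig (r / 2) hr2 hr21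
  -- lintegral lower bound
  have hmono : ∀ x ∈ closedBall z (r / 2), μ (closedBall z (r / 2)) ≤ μ (closedBall x r) := by
    intro x hx
    refine measure_mono fun w hw => ?_
    rw [mem_closedBall] at *
    have := dist_triangle w z x
    have := dist_comm z x
    linarith [dist_triangle w z x, (dist_comm z x ▸ hx : dist z x ≤ r / 2)]
  have key : μ (closedBall z (r / 2)) * μ (closedBall z (r / 2)) ≤ ∫⁻ x, μ (closedBall x r) ∂μ := by
    calc μ (closedBall z (r / 2)) * μ (closedBall z (r / 2))
        = ∫⁻ _ in closedBall z (r / 2), μ (closedBall z (r / 2)) ∂μ := by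
          rw [setLIntegral_const]
      _ ≤ ∫⁻ x in closedBall z (r / 2), μ (closedBall x r) ∂μ :=
          setLIntegral_mono (meas_cball μ r) hmono
      _ ≤ ∫⁻ x, μ (closedBall x r) ∂μ := setLIntegral_le_lintegral _ _
  have hER : ENNReal.ofReal (c₀ ^ 2 / 4 ^ d * r ^ (2 * d)) ≤ ∫⁻ x, μ (closedBall x r) ∂μ := by
    have heq : c₀ ^ 2 / 4 ^ d * r ^ (2 * d) = (c₀ * (r / 2) ^ d) * (c₀ * (r / 2) ^ d) := by
      have h4 : ((r / 2 : ℝ)) ^ d * (r / 2) ^ d = r ^ (2 * d) / 4 ^ d := by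
        rw [← pow_add, ← two_mul, pow_mul, show ((r/2:ℝ))^2 = r ^ 2 / 4 by ring,
          div_pow, ← pow_mul]
      calc c₀ ^ 2 / 4 ^ d * r ^ (2 * d) = c₀ ^ 2 * (r ^ (2 * d) / 4 ^ d) := by ring
        _ = c₀ ^ 2 * ((r / 2) ^ d * (r / 2) ^ d) := by rw [h4]
        _ = (c₀ * (r / 2) ^ d) * (c₀ * (r / 2) ^ d) := by ring
    rw [heq, ENNReal.ofReal_mul (by positivity)]
    exact le_trans (mul_le_mul' hz hz) key
  rw [corrInt]
  have hne : ∫⁻ x, μ (closedBall x r) ∂μ ≠ ∞ := (lt_of_le_of_lt (lint_le_one μ r) ENNReal.one_lt_top).ne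
  have := ENNReal.toReal_mono hne hER
  rw [ENNReal.toReal_ofReal (by positivity)] at this
  calc min 1 (c₀ ^ 2 / 4 ^ d) * r ^ (2 * d) ≤ c₀ ^ 2 / 4 ^ d * r ^ (2 * d) := by
        apply mul_le_mul_of_nonneg_right (min_le_right _ _) (by positivity)
    _ ≤ corrInt μ r := this

lemma corrInt_pos : ∀ r : ℝ, 0 < r → r ≤ 1 → 0 < corrInt μ r := by
  obtain ⟨c, hc, _, hlb⟩ := corr_lb μ
  intro r hr hr1
  exact lt_of_lt_of_le (by positivity) (hlb r hr hr1)

lemma g_nonneg : ∀ r : ℝ, 0 < r → r < 1 → 0 ≤ Real.log (corrInt μ r) / Real.log r := by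
  intro r hr hr1
  exact div_nonneg_iff.2 (Or.inr
    ⟨Real.log_nonpos (corrInt_pos μ r hr hr1.le).le (corrInt_le_one μ r),
     (Real.log_neg hr hr1).le⟩)

lemma g_le_bound : ∃ c : ℝ, 0 < c ∧ c ≤ 1 ∧ ∀ r : ℝ, 0 < r → r < 1 →
    Real.log (corrInt μ r) / Real.log r ≤ 2 * d + Real.log c / Real.log r := by
  obtain ⟨c, hc, hc1, hlb⟩ := corr_lb μ
  refine ⟨c, hc, hc1, fun r hr hr1 => ?_⟩
  have hlogr : Real.log r < 0 := Real.log_neg hr hr1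
  have hlog : Real.log c + 2 * d * Real.log r ≤ Real.log (corrInt μ r) := by
    have h1 : Real.log (c * r ^ (2 * d)) ≤ Real.log (corrInt μ r) :=
      Real.log_le_log (by positivity) (hlb r hr hr1.le)
    rw [Real.log_mul hc.ne' (by positivity), Real.log_pow] at h1
    push_cast at h1
    linarith
  have := (div_le_div_right_of_neg hlogr).2 hlog
  calc Real.log (corrInt μ r) / Real.log r
      ≤ (Real.log c + 2 * d * Real.log r) / Real.log r := this
    _ = 2 * d + Real.log c / Real.log r := by
        rw [add_div, mul_div_assoc, div_self hlogr.ne, mul_one, add_comm]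

lemma g_bdd : IsBoundedUnder (· ≤ ·) (𝓝[>] (0:ℝ))
    (fun r : ℝ => Real.log (corrInt μ r) / Real.log r) := by
  obtain ⟨c, hc, hc1, hub⟩ := g_le_bound μ
  refine ⟨2 * d + |Real.log c| / Real.log 2, ?_⟩
  rw [Filter.eventually_map]
  filter_upwards [Ioo_mem_nhdsGT_of_mem (Set.left_mem_Ico.2 (by norm_num : (0:ℝ) < 1/2))]
    with r hr
  have hr0 : 0 < r := hr.1
  have hr1 : r < 1 := lt_trans hr.2 (by norm_num)
  refine le_trans (hub r hr0 hr1) ?_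
  have hlogr : Real.log r < 0 := Real.log_neg hr0 hr1
  have h2 : Real.log 2 ≤ -Real.log r := by
    have := Real.log_le_log hr0 hr.2.le
    rw [show (1/2:ℝ) = 2⁻¹ by norm_num, Real.log_inv] at this
    linarith
  have hlog2 : (0:ℝ) < Real.log 2 := Real.log_pos (by norm_num)
  have heq2 : Real.log c / Real.log r = |Real.log c| / (-Real.log r) := by
    rw [abs_of_nonpos (Real.log_nonpos hc.le hc1), ← neg_div_neg_eq]
  have : Real.log c / Real.log r ≤ |Real.log c| / Real.log 2 := by
    rw [heq2]
    exact div_le_div_of_nonneg_left (abs_nonneg _) hlog2 h2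
  linarith

lemma g_ev_nonneg : ∀ᶠ r in 𝓝[>] (0:ℝ),
    0 ≤ Real.log (corrInt μ r) / Real.log r := by
  filter_upwards [Ioo_mem_nhdsGT_of_mem (Set.left_mem_Ico.2 one_pos)] with r hr
  exact g_nonneg μ r hr.1 hr.2

lemma g_cobdd : IsCoboundedUnder (· ≤ ·) (𝓝[>] (0:ℝ))
    (fun r : ℝ => Real.log (corrInt μ r) / Real.log r) :=
  IsBoundedUnder.isCoboundedUnder_le ⟨0, Filter.eventually_map.2 (g_ev_nonneg μ)⟩

lemma ucod_le_two_d : ucod μ ≤ 2 * d := by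
  obtain ⟨c, hc, hc1, hub⟩ := g_le_bound μ
  have htend : Tendsto (fun r : ℝ => 2 * (d:ℝ) + Real.log c / Real.log r)
      (𝓝[>] (0:ℝ)) (𝓝 (2 * d)) := by
    have h1 : Tendsto (fun r : ℝ => Real.log c / Real.log r) (𝓝[>] (0:ℝ)) (𝓝 0) := by
      have h2 : Tendsto (fun r : ℝ => (-Real.log c) / (-Real.log r)) (𝓝[>] (0:ℝ)) (𝓝 0) :=
        Filter.Tendsto.div_atTop tendsto_const_nhds
          (tendsto_neg_atBot_atTop.comp Real.tendsto_log_nhdsGT_zero)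
      simpa [neg_div_neg_eq] using h2
    simpa using tendsto_const_nhds.add h1
  have hlimsup : limsup (fun r : ℝ => 2 * (d:ℝ) + Real.log c / Real.log r) (𝓝[>] (0:ℝ))
      = 2 * d := htend.limsup_eq
  rw [ucod, ← hlimsup]
  apply limsup_le_limsup _ (g_cobdd μ) htend.isBoundedUnder_le
  filter_upwards [Ioo_mem_nhdsGT_of_mem (Set.left_mem_Ico.2 one_pos)] with r hr
  exact hub r hr.1 hr.2

lemma le_ucod_of_seq (s : ℝ) (r : ℕ → ℝ) (hrpos : ∀ k, 0 < r k)
    (hrt : Tendsto r atTop (𝓝 0))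
    (hball : ∀ (x : EuclideanSpace ℝ (Fin d)) (k : ℕ),
      μ (closedBall x (r k)) ≤ ENNReal.ofReal (r k ^ s)) : s ≤ ucod μ := by
  have hfreq : ∃ᶠ ρ in 𝓝[>] (0:ℝ), s ≤ Real.log (corrInt μ ρ) / Real.log ρ := by
    have hmap : Tendsto r atTop (𝓝[>] (0:ℝ)) :=
      tendsto_nhdsWithin_of_tendsto_nhds_of_eventually_within r hrt
        (Filter.Eventually.of_forall fun k => hrpos k)
    apply hmap.frequently
    have hev : ∀ᶠ k in atTop, r k < 1 := by
      have := hrt.eventually (gt_mem_nhds one_pos)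
      filter_upwards [this] with k hk using hk
    apply Filter.Eventually.frequently
    filter_upwards [hev] with k hk
    -- corrInt μ (r k) ≤ (r k) ^ s
    have hci : corrInt μ (r k) ≤ r k ^ s := by
      have hlint : ∫⁻ x, μ (closedBall x (r k)) ∂μ ≤ ENNReal.ofReal (r k ^ s) := by
        calc ∫⁻ x, μ (closedBall x (r k)) ∂μ ≤ ∫⁻ _, ENNReal.ofReal (r k ^ s) ∂μ :=
              lintegral_mono fun x => hball x k
          _ = ENNReal.ofReal (r k ^ s) := by simp
      have := ENNReal.toReal_mono ENNReal.ofReal_ne_top hlint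
      rwa [ENNReal.toReal_ofReal (Real.rpow_nonneg (hrpos k).le s)] at this
    have hlogr2 : Real.log (r k) < 0 := Real.log_neg (hrpos k) hk
    have hlog : Real.log (corrInt μ (r k)) ≤ s * Real.log (r k) := by
      have := Real.log_le_log (corrInt_pos μ (r k) (hrpos k) hk.le) hci
      rwa [Real.log_rpow (hrpos k)] at this
    have := (div_le_div_right_of_neg hlogr2).2 hlog
    calc s = s * Real.log (r k) / Real.log (r k) := by
          rw [mul_div_assoc, div_self hlogr2.ne, mul_one]
      _ ≤ Real.log (corrInt μ (r k)) / Real.log (r k) := this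
  exact le_limsup_of_frequently_le hfreq (g_bdd μ)

lemma ev_rpow_le (e t : ℝ) (he : 0 < e) (ht : 0 < t) :
    ∀ᶠ ρ in 𝓝[>] (0:ℝ), ρ ^ e ≤ t := by
  have hm : 0 < t ^ e⁻¹ := Real.rpow_pos_of_pos ht _
  filter_upwards [Ioo_mem_nhdsGT_of_mem (Set.left_mem_Ico.2 hm)] with ρ hρ
  have h1 : ρ ^ e ≤ (t ^ e⁻¹) ^ e :=
    Real.rpow_le_rpow hρ.1.le hρ.2.le he.le
  rwa [← Real.rpow_mul ht.le, inv_mul_cancel₀ he.ne', Real.rpow_one] at h1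

lemma hard_dir (s'' : ℝ) (h0 : 0 ≤ s'') (hlt : s'' < ucod μ) :
    ∃ ν : Measure (EuclideanSpace ℝ (Fin d)), IsProbabilityMeasure ν ∧
      (∀ U : Set (EuclideanSpace ℝ (Fin d)), IsOpen U → ν U ≠ 0 → μ U ≠ 0) ∧
      ∃ r : ℕ → ℝ, StrictAnti r ∧ (∀ k, 0 < r k) ∧ Tendsto r atTop (𝓝 0) ∧
        ∀ (x : EuclideanSpace ℝ (Fin d)) (k : ℕ),
          ν (closedBall x (r k)) ≤ ENNReal.ofReal (r k ^ s'') := by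
  set u := ucod μ with hu
  set s : ℝ := s'' + (u - s'') / 3 with hs
  set s' : ℝ := s'' + 2 * (u - s'') / 3 with hs'
  have hss : s'' < s := by rw [hs]; linarith
  have hss' : s < s' := by rw [hs, hs']; linarith
  have hs'u : s' < u := by rw [hs']; linarith
  set F : ℝ → Prop := fun ρ => 0 < ρ ∧ ρ < 1 ∧
    (∫⁻ x, μ (closedBall x ρ) ∂μ) < ENNReal.ofReal (ρ ^ s') with hF_def
  have hF : ∃ᶠ ρ in 𝓝[>] (0:ℝ), F ρ := by
    have h1 : ∃ᶠ ρ in 𝓝[>] (0:ℝ), s' < Real.log (corrInt μ ρ) / Real.log ρ :=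
      frequently_lt_of_lt_limsup (g_cobdd μ) hs'u
    refine (h1.and_eventually (Ioo_mem_nhdsGT_of_mem (Set.left_mem_Ico.2 one_pos))).mono ?_
    rintro ρ ⟨hgρ, hρ0, hρ1⟩
    refine ⟨hρ0, hρ1, ?_⟩
    have hlogρ : Real.log ρ < 0 := Real.log_neg hρ0 hρ1
    have hlog : Real.log (corrInt μ ρ) < s' * Real.log ρ :=
      (lt_div_iff_of_neg hlogρ).1 hgρ
    rw [← Real.log_rpow hρ0] at hlog
    have hcpos : 0 < corrInt μ ρ := corrInt_pos μ ρ hρ0 hρ1.le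
    have hrpos : 0 < ρ ^ s' := Real.rpow_pos_of_pos hρ0 _
    have hci : corrInt μ ρ < ρ ^ s' := by
      have := Real.exp_lt_exp.2 hlog
      rwa [Real.exp_log hcpos, Real.exp_log hrpos] at this
    have hne : ∫⁻ x, μ (closedBall x ρ) ∂μ ≠ ∞ :=
      (lt_of_le_of_lt (lint_le_one μ ρ) ENNReal.one_lt_top).ne
    exact (ENNReal.lt_ofReal_iff_toReal_lt hne).2 hci
  set C : ℕ → ℝ → Prop := fun k ρ =>
    ρ ^ (s' - s) ≤ (1/2 : ℝ) ^ (k + 2) ∧ ρ ≤ 1 / (k + 1) ∧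
      ρ ^ (s - s'') ≤ (1/2 : ℝ) ^ s'' / 2 with hC_def
  have hC : ∀ k : ℕ, ∀ᶠ ρ in 𝓝[>] (0:ℝ), C k ρ := by
    intro k
    have e1 := ev_rpow_le (s' - s) ((1/2 : ℝ) ^ (k + 2)) (by linarith) (by positivity)
    have e2 := ev_rpow_le 1 (1 / ((k:ℝ) + 1)) one_pos (by positivity)
    have e3 := ev_rpow_le (s - s'') ((1/2 : ℝ) ^ s'' / 2) (by linarith)
      (by positivity)
    filter_upwards [e1, e2, e3] with ρ h1 h2 h3
    exact ⟨h1, by rwa [Real.rpow_one] at h2, h3⟩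
  have hstep : ∀ (k : ℕ) (ε : ℝ), 0 < ε → ∃ ρ, (F ρ ∧ C k ρ) ∧ ρ < ε := by
    intro k ε hε
    exact ((hF.and_eventually ((hC k).and
      (Ioo_mem_nhdsGT_of_mem (Set.left_mem_Ico.2 hε)))).mono
      (fun ρ h => ⟨⟨h.1, h.2.1⟩, h.2.2.2⟩)).exists
  -- recursive construction of a strictly decreasing sequence
  let seq : ℕ → {x : ℝ // 0 < x} := fun k => Nat.rec
    ⟨(hstep 0 1 one_pos).choose, (hstep 0 1 one_pos).choose_spec.1.1.1⟩
    (fun k ih => ⟨(hstep (k+1) ih.1 ih.2).choose,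
      (hstep (k+1) ih.1 ih.2).choose_spec.1.1.1⟩) k
  set ρ : ℕ → ℝ := fun k => (seq k).1 with hρ_def
  have hρprop : ∀ k, F (ρ k) ∧ C k (ρ k) := by
    intro k
    cases k with
    | zero => exact (hstep 0 1 one_pos).choose_spec.1
    | succ k => exact (hstep (k+1) (seq k).1 (seq k).2).choose_spec.1
  have hρdec : ∀ k, ρ (k+1) < ρ k := by
    intro k
    exact (hstep (k+1) (seq k).1 (seq k).2).choose_spec.2
  have hρpos : ∀ k, 0 < ρ k := fun k => (seq k).2
  -- Chebyshev
  set bad : ℕ → Set (EuclideanSpace ℝ (Fin d)) := fun k =>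
    {x | ENNReal.ofReal (ρ k ^ s) ≤ μ (closedBall x (ρ k))} with hbad_def
  have hhalf : ENNReal.ofReal ((1:ℝ)/2) = 2⁻¹ := by
    rw [show (1/2:ℝ) = 2⁻¹ by norm_num, ENNReal.ofReal_inv_of_pos (by norm_num)]
    norm_num
  have hcheb : ∀ k, μ (bad k) ≤ (2⁻¹ : ℝ≥0∞) ^ (k + 2) := by
    intro k
    obtain ⟨⟨hρ0, hρ1, hlint⟩, hC1, _, _⟩ := hρprop k
    have h1 := mul_meas_ge_le_lintegral₀ (μ := μ) (meas_cball μ (ρ k)).aemeasurable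
      (ENNReal.ofReal (ρ k ^ s))
    have h2 : ENNReal.ofReal (ρ k ^ s) * μ (bad k) ≤ ENNReal.ofReal (ρ k ^ s') :=
      le_trans h1 hlint.le
    have hsne : ENNReal.ofReal (ρ k ^ s) ≠ 0 := by
      simp [ENNReal.ofReal_eq_zero, not_le, Real.rpow_pos_of_pos hρ0]
    have hdiv : μ (bad k) ≤ ENNReal.ofReal (ρ k ^ s') / ENNReal.ofReal (ρ k ^ s) := by
      rw [ENNReal.le_div_iff_mul_le (Or.inl hsne) (Or.inl ENNReal.ofReal_ne_top)]
      rwa [mul_comm]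
    calc μ (bad k) ≤ ENNReal.ofReal (ρ k ^ s') / ENNReal.ofReal (ρ k ^ s) := hdiv
      _ = ENNReal.ofReal (ρ k ^ s' / ρ k ^ s) := by
          rw [ENNReal.ofReal_div_of_pos (Real.rpow_pos_of_pos hρ0 _)]
      _ = ENNReal.ofReal (ρ k ^ (s' - s)) := by rw [Real.rpow_sub hρ0]
      _ ≤ ENNReal.ofReal ((1/2 : ℝ) ^ (k + 2)) := ENNReal.ofReal_le_ofReal hC1
      _ = (2⁻¹ : ℝ≥0∞) ^ (k + 2) := by
          rw [ENNReal.ofReal_pow (by norm_num), hhalf]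
  set G : Set (EuclideanSpace ℝ (Fin d)) := (⋃ k, bad k)ᶜ with hG_def
  have hGc : μ (⋃ k, bad k) ≤ 2⁻¹ := by
    calc μ (⋃ k, bad k) ≤ ∑' k, μ (bad k) := measure_iUnion_le _
      _ ≤ ∑' k : ℕ, (2⁻¹ : ℝ≥0∞) ^ (k + 2) := ENNReal.tsum_le_tsum hcheb
      _ = (∑' k : ℕ, (2⁻¹ : ℝ≥0∞) ^ k) * (2⁻¹ : ℝ≥0∞) ^ 2 := by
          rw [← ENNReal.tsum_mul_right]
          congr 1; ext k; rw [pow_add]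
      _ = 2 * ((2⁻¹ : ℝ≥0∞) * 2⁻¹) := by
          rw [ENNReal.tsum_geometric, ENNReal.one_sub_inv_two, sq]
          norm_num
      _ = 2⁻¹ := by
          rw [← mul_assoc, ENNReal.mul_inv_cancel (by norm_num) (by norm_num), one_mul]
  have hG : (2⁻¹ : ℝ≥0∞) ≤ μ G := by
    have h1 : (1 : ℝ≥0∞) ≤ μ G + μ (⋃ k, bad k) := by
      calc (1 : ℝ≥0∞) = μ univ := (measure_univ (μ := μ)).symm
        _ ≤ μ (G ∪ ⋃ k, bad k) := measure_mono (by rw [hG_def, compl_union_self])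
        _ ≤ μ G + μ (⋃ k, bad k) := measure_union_le _ _
    have h2 : (1 : ℝ≥0∞) ≤ μ G + 2⁻¹ := le_trans h1 (by exact add_le_add_right hGc _)
    have := tsub_le_iff_right.2 h2
    rwa [ENNReal.one_sub_inv_two] at this
  have hGne0 : μ G ≠ 0 := fun h => by simp [h] at hG
  have hGnetop : μ G ≠ ∞ := measure_ne_top μ G
  set ν : Measure (EuclideanSpace ℝ (Fin d)) := (μ G)⁻¹ • μ.restrict G with hν_def
  have hν_prob : IsProbabilityMeasure ν := by
    constructor
    rw [hν_def, Measure.smul_apply, smul_eq_mul, Measure.restrict_apply_univ]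
    exact ENNReal.inv_mul_cancel hGne0 hGnetop
  refine ⟨ν, hν_prob, ?_, fun k => ρ k / 2, ?_, fun k => div_pos (hρpos k) two_pos, ?_, ?_⟩
  · -- absolute continuity on open sets
    intro U _ hνU
    intro hμU
    apply hνU
    rw [hν_def, Measure.smul_apply, smul_eq_mul]
    have : μ.restrict G U ≤ μ U := Measure.restrict_le_self U
    rw [hμU] at this
    simp [le_zero_iff.1 this]
  · intro a b hab
    have := strictAnti_nat_of_succ_lt hρdec hab
    linarith

  · have hub : ∀ k : ℕ, ρ k ≤ 1 / ((k:ℝ) + 1) := fun k => (hρprop k).2.2.1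
    have htend : Tendsto ρ atTop (𝓝 0) := by
      refine tendsto_of_tendsto_of_tendsto_of_le_of_le tendsto_const_nhds
        tendsto_one_div_add_atTop_nhds_zero_nat (fun k => (hρpos k).le) hub
    have := htend.div_const (2:ℝ)
    simpa using this
  · -- the ball estimate
    intro x k
    have hρ0 := hρpos k
    have hC3 : ρ k ^ (s - s'') ≤ (1/2 : ℝ) ^ s'' / 2 := (hρprop k).2.2.2
    by_cases hBG : (closedBall x (ρ k / 2) ∩ G).Nonempty
    · obtain ⟨y, hy1, hy2⟩ := hBG
      have hysub : closedBall x (ρ k / 2) ⊆ closedBall y (ρ k) := by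
        intro z hz
        rw [mem_closedBall] at *
        have h3 := dist_triangle z x y
        have h4 : dist x y ≤ ρ k / 2 := by rw [dist_comm]; exact hy1
        linarith
      have hybad : y ∉ bad k := by
        intro hyb
        exact (mem_compl_iff _ _).1 hy2 (mem_iUnion.2 ⟨k, hyb⟩)
      have hylt : μ (closedBall y (ρ k)) < ENNReal.ofReal (ρ k ^ s) := not_le.1 hybad
      have hνB : ν (closedBall x (ρ k / 2)) ≤ (μ G)⁻¹ * ENNReal.ofReal (ρ k ^ s) := by
        rw [hν_def, Measure.smul_apply, smul_eq_mul]
        apply mul_le_mul_right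
        rw [Measure.restrict_apply measurableSet_closedBall]
        exact le_trans (measure_mono (inter_subset_left.trans hysub)) hylt.le
      have hinv2 : (μ G)⁻¹ ≤ 2 := by
        have := ENNReal.inv_le_inv.2 hG
        rwa [inv_inv] at this
      have hreal : 2 * ρ k ^ s ≤ (ρ k / 2) ^ s'' := by
        have hsplit : ρ k ^ s = ρ k ^ s'' * ρ k ^ (s - s'') := by
          rw [← Real.rpow_add hρ0]; ring_nf
        have hmul : (ρ k / 2) ^ s'' = ρ k ^ s'' * (1/2 : ℝ) ^ s'' := by
          rw [← Real.mul_rpow hρ0.le (by norm_num)]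
          congr 1; ring
        calc 2 * ρ k ^ s = ρ k ^ s'' * (2 * ρ k ^ (s - s'')) := by rw [hsplit]; ring
          _ ≤ ρ k ^ s'' * ((1/2 : ℝ) ^ s'') := by
              apply mul_le_mul_of_nonneg_left _ (Real.rpow_nonneg hρ0.le _)
              linarith
          _ = (ρ k / 2) ^ s'' := hmul.symm
      calc ν (closedBall x (ρ k / 2)) ≤ (μ G)⁻¹ * ENNReal.ofReal (ρ k ^ s) := hνB
        _ ≤ 2 * ENNReal.ofReal (ρ k ^ s) := mul_le_mul_left hinv2 _
        _ = ENNReal.ofReal (2 * ρ k ^ s) := by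
            rw [ENNReal.ofReal_mul (by norm_num), ENNReal.ofReal_ofNat]
        _ ≤ ENNReal.ofReal ((ρ k / 2) ^ s'') := ENNReal.ofReal_le_ofReal hreal
    · have hempty : closedBall x (ρ k / 2) ∩ G = ∅ := not_nonempty_iff_eq_empty.1 hBG
      rw [hν_def, Measure.smul_apply, smul_eq_mul,
        Measure.restrict_apply measurableSet_closedBall, hempty]
      simp


theorem stmt1 {d : ℕ} (E : Set (EuclideanSpace ℝ (Fin d))) (hE : MeasurableSet E) :
    ucodSet E = sSup {s : ℝ | 0 ≤ s ∧ ∃ μ ∈ probOn E, ∃ r : ℕ → ℝ,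
      StrictAnti r ∧ (∀ k, 0 < r k) ∧ Tendsto r atTop (𝓝 0) ∧
      ∀ (x : EuclideanSpace ℝ (Fin d)) (k : ℕ),
        μ (closedBall x (r k)) ≤ ENNReal.ofReal (r k ^ s)} := by
  set S := {s : ℝ | 0 ≤ s ∧ ∃ μ ∈ probOn E, ∃ r : ℕ → ℝ,
      StrictAnti r ∧ (∀ k, 0 < r k) ∧ Tendsto r atTop (𝓝 0) ∧
      ∀ (x : EuclideanSpace ℝ (Fin d)) (k : ℕ),
        μ (closedBall x (r k)) ≤ ENNReal.ofReal (r k ^ s)} with hS_def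
  rcases Set.eq_empty_or_nonempty (probOn E) with hP | ⟨μ₀, hμ₀⟩
  · have h1 : ucod '' probOn E = (∅ : Set ℝ) := by rw [hP, image_empty]
    have h2 : S = (∅ : Set ℝ) := by
      ext s
      constructor
      · rintro ⟨-, μ, hμ, -⟩
        rw [hP] at hμ
        exact hμ.elim
      · intro h
        exact h.elim
    rw [ucodSet, h1, h2]
  · haveI hμ₀prob : IsProbabilityMeasure μ₀ := hμ₀.1
    have h0S : (0:ℝ) ∈ S := by
      refine ⟨le_refl 0, μ₀, hμ₀, fun k => (2⁻¹:ℝ)^(k+1), ?_, ?_, ?_, ?_⟩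
      · intro a b hab
        apply pow_lt_pow_right_of_lt_one₀ (by norm_num) (by norm_num)
        omega
      · intro k; positivity
      · have := tendsto_pow_atTop_nhds_zero_of_lt_one
          (by norm_num : (0:ℝ) ≤ 2⁻¹) (by norm_num : (2⁻¹:ℝ) < 1)
        exact this.comp (tendsto_add_atTop_nat 1)
      · intro x k
        rw [Real.rpow_zero, ENNReal.ofReal_one]
        exact prob_le_one
    have hSle : ∀ s ∈ S, ∃ μ' ∈ probOn E, s ≤ ucod μ' := by
      rintro s ⟨hs0, μ', hμ', r, hanti, hpos, htend, hball⟩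
      haveI := hμ'.1
      exact ⟨μ', hμ', le_ucod_of_seq μ' s r hpos htend hball⟩
    have hSbdd : BddAbove S := by
      refine ⟨2*d, fun s hs => ?_⟩
      obtain ⟨μ', hμ', hle⟩ := hSle s hs
      haveI := hμ'.1
      exact le_trans hle (ucod_le_two_d μ')
    have hAbdd : BddAbove (ucod '' probOn E) := by
      refine ⟨2*d, ?_⟩
      rintro a ⟨μ', hμ', rfl⟩
      haveI := hμ'.1
      exact ucod_le_two_d μ'
    have hAne : (ucod '' probOn E).Nonempty := ⟨ucod μ₀, mem_image_of_mem _ hμ₀⟩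
    rw [ucodSet]
    apply le_antisymm
    · apply csSup_le hAne
      rintro a ⟨μ', hμ', rfl⟩
      haveI := hμ'.1
      rcases le_or_gt (ucod μ') 0 with h | h
      · exact le_trans h (le_csSup hSbdd h0S)
      · apply le_of_forall_lt
        intro c hc
        set t := max ((c + ucod μ')/2) (ucod μ' / 2) with ht_def
        have ht1 : t < ucod μ' := max_lt (by linarith) (by linarith)
        have ht0 : 0 ≤ t := le_trans (by linarith) (le_max_right _ _)
        have htc : c < t := lt_of_lt_of_le (by linarith) (le_max_left _ _)
        obtain ⟨ν, hν, habs, r, h1, h2, h3, h4⟩ := hard_dir μ' t ht0 ht1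
        have hνE : ν ∈ probOn E := by
          refine ⟨hν, fun x hx => hμ'.2 ?_⟩
          intro U hU hxU
          exact habs U hU (hx U hU hxU)
        have htS : t ∈ S := ⟨ht0, ν, hνE, r, h1, h2, h3, h4⟩
        exact lt_of_lt_of_le htc (le_csSup hSbdd htS)
    · apply csSup_le ⟨0, h0S⟩
      intro s hs
      obtain ⟨μ', hμ', hle⟩ := hSle s hs
      exact le_trans hle (le_csSup hAbdd (mem_image_of_mem ucod hμ'))
end

section
/- For every Borel set E ⊆ ℝ^d, ucod E = sup{ s ≥ 0 : there exist μ ∈ 𝒫(E) and a strictly increasing sequence of positive integers n_k such that μ(C) ≤ 2^{-n_k s} for every dyadic cube C of side 2^{-n_k} and every k }. -/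
open MeasureTheory Metric Filter Set Topology

/-- A dyadic cube of side `2^{-n}` in `ℝ^d`: a product of half-open intervals
`(j_i 2^{-n}, (j_i+1) 2^{-n}]` with integer `j_i`. -/
def IsDyadicCube {d : ℕ} (n : ℕ) (C : Set (EuclideanSpace ℝ (Fin d))) : Prop :=
  ∃ j : Fin d → ℤ, C = {x | ∀ i : Fin d,
    (j i : ℝ) * 2 ^ (-(n : ℤ)) < x i ∧ x i ≤ ((j i : ℝ) + 1) * 2 ^ (-(n : ℤ))}

namespace Dyad
variable {d : ℕ}
local notation "X" => EuclideanSpace ℝ (Fin d)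

noncomputable def cube (n : ℕ) (j : Fin d → ℤ) : Set X :=
  {x | ∀ i : Fin d,
    (j i : ℝ) * 2 ^ (-(n : ℤ)) < x i ∧ x i ≤ ((j i : ℝ) + 1) * 2 ^ (-(n : ℤ))}

lemma isDyadicCube_iff {n : ℕ} {C : Set X} :
    IsDyadicCube n C ↔ ∃ j : Fin d → ℤ, C = cube n j := Iff.rfl

lemma twopow_pos (n : ℕ) : (0:ℝ) < 2 ^ (-(n:ℤ)) := by positivity

lemma mem_cube_iff {n : ℕ} {j : Fin d → ℤ} {x : X} :
    x ∈ cube n j ↔ ∀ i, (j i : ℝ) < x i * 2 ^ (n:ℤ) ∧ x i * 2 ^ (n:ℤ) ≤ (j i : ℝ) + 1 := by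
  have h2 : (0:ℝ) < 2 ^ (n:ℤ) := by positivity
  simp only [cube, mem_setOf_eq]
  refine forall_congr' fun i => ?_
  rw [zpow_neg, ← div_eq_mul_inv, ← div_eq_mul_inv, div_lt_iff₀ h2, le_div_iff₀ h2,
    mul_comm (x i)]

noncomputable def idx (n : ℕ) (x : X) : Fin d → ℤ := fun i => ⌈x i * 2 ^ (n:ℤ)⌉ - 1

lemma mem_cube_iff_idx {n : ℕ} {j : Fin d → ℤ} {x : X} :
    x ∈ cube n j ↔ j = idx n x := by
  rw [mem_cube_iff, funext_iff]
  refine forall_congr' fun i => ?_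
  constructor
  · rintro ⟨h1, h2⟩
    have : ⌈x i * 2 ^ (n:ℤ)⌉ = j i + 1 := by
      rw [Int.ceil_eq_iff]
      · constructor
        · push_cast; linarith
        · push_cast; linarith
    simp only [idx]; rw [this]; ring
  · intro h
    have h1 : (⌈x i * 2 ^ (n:ℤ)⌉ : ℝ) < x i * 2 ^ (n:ℤ) + 1 := Int.ceil_lt_add_one _
    have h2 : x i * 2 ^ (n:ℤ) ≤ (⌈x i * 2 ^ (n:ℤ)⌉ : ℝ) := Int.le_ceil _
    rw [h]
    constructor
    · simp only [idx]; push_cast; linarith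
    · simp only [idx]; push_cast; linarith

lemma mem_cube_idx (n : ℕ) (x : X) : x ∈ cube n (idx n x) := mem_cube_iff_idx.mpr rfl

lemma cube_disjoint {n : ℕ} : Pairwise (Function.onFun Disjoint (cube (d := d) n)) := by
  intro j k hjk
  rw [Function.onFun, Set.disjoint_left]
  intro x hj hk
  exact hjk ((mem_cube_iff_idx.mp hj).trans (mem_cube_iff_idx.mp hk).symm)

lemma iUnion_cube (n : ℕ) : (⋃ j : Fin d → ℤ, cube n j) = univ := by
  refine eq_univ_of_forall fun x => mem_iUnion.mpr ⟨idx n x, mem_cube_idx n x⟩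

lemma measurableSet_cube {n : ℕ} {j : Fin d → ℤ} : MeasurableSet (cube n j) := by
  have : cube n j = ⋂ i : Fin d, (fun x : X => x i) ⁻¹'
      (Set.Ioc ((j i : ℝ) * 2 ^ (-(n:ℤ))) (((j i : ℝ) + 1) * 2 ^ (-(n:ℤ)))) := by
    ext x; simp [cube, mem_iInter]
  rw [this]
  exact MeasurableSet.iInter fun i => (show Measurable (fun x : X => x i) from (EuclideanSpace.proj (𝕜 := ℝ) i).continuous.measurable) measurableSet_Ioc

lemma dist_le_of_mem_cube {n : ℕ} {j : Fin d → ℤ} {x y : X}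
    (hx : x ∈ cube n j) (hy : y ∈ cube n j) : dist x y ≤ (d + 1) * 2 ^ (-(n:ℤ)) := by
  have hp := twopow_pos n
  have hcoord : ∀ i, |x i - y i| ≤ 2 ^ (-(n:ℤ)) := by
    intro i
    obtain ⟨hx1, hx2⟩ := hx i
    obtain ⟨hy1, hy2⟩ := hy i
    rw [abs_le]; constructor <;> linarith
  rw [EuclideanSpace.dist_eq]
  have hb : (0:ℝ) ≤ ((d:ℝ) + 1) * 2 ^ (-(n:ℤ)) := by positivity
  have hsum : ∑ i, dist (x i) (y i) ^ 2 ≤ (((d:ℝ) + 1) * 2 ^ (-(n:ℤ))) ^ 2 := by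
    calc ∑ i, dist (x i) (y i) ^ 2 ≤ ∑ _i : Fin d, ((2:ℝ) ^ (-(n:ℤ))) ^ 2 :=
          Finset.sum_le_sum (fun i _ => by
            have h := hcoord i
            rw [Real.dist_eq]
            nlinarith [abs_nonneg (x i - y i), twopow_pos n])
      _ = (d:ℝ) * ((2:ℝ) ^ (-(n:ℤ))) ^ 2 := by
            rw [Finset.sum_const, Finset.card_univ, Fintype.card_fin, nsmul_eq_mul]
      _ ≤ (((d:ℝ) + 1) * 2 ^ (-(n:ℤ))) ^ 2 := by nlinarith [twopow_pos n]
  calc Real.sqrt (∑ i, dist (x i) (y i) ^ 2) ≤ Real.sqrt ((((d:ℝ) + 1) * 2 ^ (-(n:ℤ))) ^ 2) :=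
        Real.sqrt_le_sqrt hsum
    _ = ((d:ℝ) + 1) * 2 ^ (-(n:ℤ)) := Real.sqrt_sq hb


lemma abs_coord_le_dist (x y : X) (i : Fin d) : |x i - y i| ≤ dist x y := by
  rw [EuclideanSpace.dist_eq]
  calc |x i - y i| = Real.sqrt ((x i - y i) ^ 2) := (Real.sqrt_sq_eq_abs _).symm
    _ ≤ Real.sqrt (∑ i, dist (x i) (y i) ^ 2) := by
        apply Real.sqrt_le_sqrt
        have : (x i - y i) ^ 2 = dist (x i) (y i) ^ 2 := by rw [Real.dist_eq, sq_abs]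
        rw [this]
        exact Finset.single_le_sum (f := fun i => dist (x i) (y i) ^ 2)
          (fun i _ => sq_nonneg _) (Finset.mem_univ i)

def nbrs : Finset (Fin d → ℤ) := Fintype.piFinset (fun _ => ({-1, 0, 1} : Finset ℤ))

lemma card_nbrs : (nbrs (d := d)).card = 3 ^ d := by
  simp [nbrs, Fintype.card_piFinset]

lemma closedBall_subset_nbrs (n : ℕ) (x : X) :
    closedBall x (2 ^ (-(n:ℤ))) ⊆ ⋃ e ∈ nbrs (d := d), cube n (idx n x + e) := by
  intro y hy
  have hp : (0:ℝ) < 2 ^ (-(n:ℤ)) := by positivity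
  have hyx : ∀ i, |y i - x i| ≤ 2 ^ (-(n:ℤ)) := by
    intro i
    exact (abs_coord_le_dist y x i).trans (mem_closedBall.mp hy)
  have key : ∀ i, idx n y i - idx n x i ∈ ({-1, 0, 1} : Finset ℤ) := by
    intro i
    have hyc := (mem_cube_idx n y) i
    have hxc := (mem_cube_idx n x) i
    set k := idx n y i with hk
    set j := idx n x i with hj
    have h1 : (k:ℝ) * 2 ^ (-(n:ℤ)) < y i := hyc.1
    have h2 : y i ≤ ((k:ℝ) + 1) * 2 ^ (-(n:ℤ)) := hyc.2
    have h3 : (j:ℝ) * 2 ^ (-(n:ℤ)) < x i := hxc.1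
    have h4 : x i ≤ ((j:ℝ) + 1) * 2 ^ (-(n:ℤ)) := hxc.2
    have h5 := abs_le.mp (hyx i)
    have hlt1 : (k:ℝ) < j + 2 := by nlinarith
    have hlt2 : (j:ℝ) - 1 < k + 1 := by nlinarith
    have i1 : k < j + 2 := by exact_mod_cast hlt1
    have i2 : j - 1 < k + 1 := by exact_mod_cast hlt2
    simp only [Finset.mem_insert, Finset.mem_singleton]
    omega
  have he : (idx n y - idx n x) ∈ nbrs (d := d) :=
    Fintype.mem_piFinset.mpr fun i => key i
  refine mem_biUnion he ?_
  rw [show idx n x + (idx n y - idx n x) = idx n y by ring]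
  exact mem_cube_idx n y

lemma measure_closedBall_le (μ : Measure X) (n : ℕ) (x : X) (B : ENNReal)
    (hB : ∀ j : Fin d → ℤ, μ (cube n j) ≤ B) :
    μ (closedBall x (2 ^ (-(n:ℤ)))) ≤ 3 ^ d * B := by
  calc μ (closedBall x (2 ^ (-(n:ℤ))))
      ≤ μ (⋃ e ∈ nbrs (d := d), cube n (idx n x + e)) :=
        measure_mono (closedBall_subset_nbrs n x)
    _ ≤ ∑ e ∈ nbrs (d := d), μ (cube n (idx n x + e)) := measure_biUnion_finset_le _ _
    _ ≤ ∑ _e ∈ nbrs (d := d), B := Finset.sum_le_sum fun e _ => hB _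
    _ = 3 ^ d * B := by rw [Finset.sum_const, card_nbrs, nsmul_eq_mul]; norm_cast

noncomputable def subIdx (n : ℕ) (j₀ : Fin d → ℤ) : Finset (Fin d → ℤ) :=
  Fintype.piFinset (fun i => Finset.Ico (j₀ i * 2 ^ n) ((j₀ i + 1) * 2 ^ n))

lemma card_subIdx (n : ℕ) (j₀ : Fin d → ℤ) : (subIdx n j₀).card = 2 ^ (n * d) := by
  simp only [subIdx, Fintype.card_piFinset, Int.card_Ico]
  have : ∀ i : Fin d, ((j₀ i + 1) * 2 ^ n - j₀ i * 2 ^ n).toNat = 2 ^ n := by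
    intro i
    have : (j₀ i + 1) * 2 ^ n - j₀ i * 2 ^ n = 2 ^ n := by ring
    rw [this, show ((2:ℤ) ^ n) = ((2 ^ n : ℕ) : ℤ) by push_cast; ring, Int.toNat_natCast]
  simp only [this]
  rw [Finset.prod_const, Finset.card_univ, Fintype.card_fin, ← pow_mul]

lemma cube_zero_subset_sub (n : ℕ) (j₀ : Fin d → ℤ) :
    cube 0 j₀ ⊆ ⋃ m ∈ subIdx n j₀, cube n m := by
  intro x hx
  have h2 : (0:ℝ) < 2 ^ (n:ℤ) := by positivity
  have hmem : idx n x ∈ subIdx n j₀ := by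
    simp only [subIdx, Fintype.mem_piFinset]
    intro i
    have hx0 := hx i
    simp only [Nat.cast_zero, neg_zero, zpow_zero, mul_one] at hx0
    rw [Finset.mem_Ico]
    constructor
    · have : (↑(j₀ i * 2 ^ n) : ℝ) < x i * 2 ^ (n:ℤ) := by
        push_cast
        calc ((j₀ i : ℝ)) * 2 ^ n = (j₀ i : ℝ) * 2 ^ (n:ℤ) := by norm_cast
          _ < x i * 2 ^ (n:ℤ) := by nlinarith [hx0.1]
      have hlt : j₀ i * 2 ^ n < ⌈x i * 2 ^ (n:ℤ)⌉ := Int.lt_ceil.mpr this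
      simp only [idx]; omega
    · have : x i * 2 ^ (n:ℤ) ≤ (↑((j₀ i + 1) * 2 ^ n) : ℝ) := by
        push_cast
        calc x i * 2 ^ (n:ℤ) ≤ ((j₀ i : ℝ) + 1) * 2 ^ (n:ℤ) := by nlinarith [hx0.2]
          _ = ((j₀ i : ℝ) + 1) * 2 ^ n := by norm_cast
      have hle : ⌈x i * 2 ^ (n:ℤ)⌉ ≤ (j₀ i + 1) * 2 ^ n := Int.ceil_le.mpr this
      simp only [idx]; omega
  exact mem_biUnion hmem (mem_cube_idx n x)

lemma exists_sub_cube_le (μ : Measure X) (n : ℕ) (j₀ : Fin d → ℤ) :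
    ∃ m, μ (cube 0 j₀) ≤ 2 ^ (n * d) * μ (cube n m) := by
  have hne : (subIdx (d := d) n j₀).Nonempty := by
    rw [← Finset.card_pos, card_subIdx]; positivity
  obtain ⟨m, hm, hmax⟩ := Finset.exists_max_image (subIdx n j₀) (fun m => μ (cube n m)) hne
  refine ⟨m, ?_⟩
  calc μ (cube 0 j₀) ≤ μ (⋃ m ∈ subIdx n j₀, cube n m) :=
        measure_mono (cube_zero_subset_sub n j₀)
    _ ≤ ∑ b ∈ subIdx n j₀, μ (cube n b) := measure_biUnion_finset_le _ _
    _ ≤ ∑ _b ∈ subIdx n j₀, μ (cube n m) := Finset.sum_le_sum fun b hb => hmax b hb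
    _ = 2 ^ (n * d) * μ (cube n m) := by
        rw [Finset.sum_const, card_subIdx, nsmul_eq_mul]; norm_cast

lemma measure_cube_zero_le (μ : Measure X) (n : ℕ) (j₀ : Fin d → ℤ) (B : ENNReal)
    (hB : ∀ j : Fin d → ℤ, μ (cube n j) ≤ B) : μ (cube 0 j₀) ≤ 2 ^ (n * d) * B := by
  obtain ⟨m, hm⟩ := exists_sub_cube_le μ n j₀
  exact hm.trans (mul_le_mul_right (hB m) _)


lemma exists_cube_zero_pos (μ : Measure X) [IsProbabilityMeasure μ] :
    ∃ j₀ : Fin d → ℤ, 0 < μ (cube 0 j₀) := by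
  by_contra h
  push_neg at h
  simp only [le_zero_iff] at h
  have h0 : μ (⋃ j : Fin d → ℤ, cube 0 j) = 0 := measure_iUnion_null h
  rw [iUnion_cube, measure_univ] at h0
  exact one_ne_zero h0

section MeasureLemmas

lemma lint_le_one (μ : Measure X) [IsProbabilityMeasure μ] (r : ℝ) : ∫⁻ x, μ (closedBall x r) ∂μ ≤ 1 := by
  calc ∫⁻ x, μ (closedBall x r) ∂μ ≤ ∫⁻ _x, 1 ∂μ :=
        lintegral_mono fun x => prob_le_one
    _ = 1 := by rw [lintegral_one, measure_univ]

lemma lint_ne_top (μ : Measure X) [IsProbabilityMeasure μ] (r : ℝ) : ∫⁻ x, μ (closedBall x r) ∂μ ≠ ⊤ :=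
  ne_top_of_le_ne_top ENNReal.one_ne_top (lint_le_one μ r)

lemma corrInt_le_one (μ : Measure X) [IsProbabilityMeasure μ] (r : ℝ) : corrInt μ r ≤ 1 := by
  rw [corrInt, ← ENNReal.toReal_one]
  exact ENNReal.toReal_mono ENNReal.one_ne_top (lint_le_one μ r)

lemma lint_pos (μ : Measure X) [IsProbabilityMeasure μ] {r : ℝ} (hr : 0 < r) : 0 < ∫⁻ x, μ (closedBall x r) ∂μ := by
  obtain ⟨D, hDc, hDd⟩ := TopologicalSpace.exists_countable_dense X
  have hcover : (univ : Set X) ⊆ ⋃ q ∈ D, closedBall q (r / 2) := by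
    intro x _
    obtain ⟨q, hq1, hq2⟩ := hDd.exists_mem_open (isOpen_ball : IsOpen (ball x (r/2))) ⟨x, mem_ball_self (by linarith)⟩
    refine mem_biUnion hq1 ?_
    rw [mem_closedBall, dist_comm]
    exact le_of_lt (mem_ball.mp hq2)
  have hx0 : ∃ x₀ : X, μ (closedBall x₀ (r / 2)) ≠ 0 := by
    by_contra h
    push_neg at h
    have : μ (⋃ q ∈ D, closedBall q (r / 2)) = 0 :=
      measure_biUnion_null_iff hDc |>.mpr fun q _ => h q
    have h1 : μ (univ : Set X) = 0 := measure_mono_null hcover this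
    rw [measure_univ] at h1
    exact one_ne_zero h1
  obtain ⟨x₀, hx₀⟩ := hx0
  have hmono : ∀ x ∈ closedBall x₀ (r / 2),
      μ (closedBall x₀ (r / 2)) ≤ μ (closedBall x r) := by
    intro x hx
    apply measure_mono
    intro y hy
    rw [mem_closedBall] at *
    calc dist y x ≤ dist y x₀ + dist x₀ x := dist_triangle _ _ _
      _ ≤ r / 2 + r / 2 := add_le_add hy (dist_comm x x₀ ▸ hx)
      _ = r := by ring
  calc (0:ENNReal) < μ (closedBall x₀ (r / 2)) * μ (closedBall x₀ (r / 2)) :=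
        ENNReal.mul_pos hx₀ hx₀
    _ = ∫⁻ _x in closedBall x₀ (r / 2), μ (closedBall x₀ (r / 2)) ∂μ := by
        rw [setLIntegral_const, mul_comm]
    _ ≤ ∫⁻ x in closedBall x₀ (r / 2), μ (closedBall x r) ∂μ :=
        setLIntegral_mono' measurableSet_closedBall hmono
    _ ≤ ∫⁻ x, μ (closedBall x r) ∂μ := setLIntegral_le_lintegral _ _

lemma corrInt_pos (μ : Measure X) [IsProbabilityMeasure μ] {r : ℝ} (hr : 0 < r) : 0 < corrInt μ r :=
  ENNReal.toReal_pos (lint_pos μ hr).ne' (lint_ne_top μ r)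

lemma lint_mono (μ : Measure X) [IsProbabilityMeasure μ] {r r' : ℝ} (h : r ≤ r') :
    ∫⁻ x, μ (closedBall x r) ∂μ ≤ ∫⁻ x, μ (closedBall x r') ∂μ :=
  lintegral_mono fun x => measure_mono (closedBall_subset_closedBall h)

lemma corrInt_mono (μ : Measure X) [IsProbabilityMeasure μ] {r r' : ℝ} (h : r ≤ r') : corrInt μ r ≤ corrInt μ r' :=
  ENNReal.toReal_mono (lint_ne_top μ r') (lint_mono μ h)

lemma sum_cube_sq_le (μ : Measure X) [IsProbabilityMeasure μ] (n : ℕ) {r : ℝ} (h : ((d:ℝ) + 1) * 2 ^ (-(n:ℤ)) ≤ r) :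
    ∑' j : Fin d → ℤ, μ (cube n j) ^ 2 ≤ ∫⁻ x, μ (closedBall x r) ∂μ := by
  have key : ∀ j : Fin d → ℤ,
      μ (cube n j) ^ 2 ≤ ∫⁻ x in cube n j, μ (closedBall x r) ∂μ := by
    intro j
    calc μ (cube n j) ^ 2 = ∫⁻ _x in cube n j, μ (cube n j) ∂μ := by
          rw [setLIntegral_const, sq]
      _ ≤ ∫⁻ x in cube n j, μ (closedBall x r) ∂μ := by
          apply setLIntegral_mono' measurableSet_cube
          intro x hx
          apply measure_mono
          intro y hy
          rw [mem_closedBall]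
          exact (dist_le_of_mem_cube hy hx).trans h
  calc ∑' j : Fin d → ℤ, μ (cube n j) ^ 2
      ≤ ∑' j : Fin d → ℤ, ∫⁻ x in cube n j, μ (closedBall x r) ∂μ :=
        ENNReal.tsum_le_tsum key
    _ = ∫⁻ x in ⋃ j : Fin d → ℤ, cube n j, μ (closedBall x r) ∂μ :=
        (lintegral_iUnion (fun _ => measurableSet_cube) cube_disjoint _).symm
    _ = ∫⁻ x, μ (closedBall x r) ∂μ := by rw [iUnion_cube, Measure.restrict_univ]

lemma cube_sq_le (μ : Measure X) [IsProbabilityMeasure μ] (n : ℕ) (m : Fin d → ℤ) {r : ℝ} (h : ((d:ℝ) + 1) * 2 ^ (-(n:ℤ)) ≤ r) :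
    μ (cube n m) ^ 2 ≤ ∫⁻ x, μ (closedBall x r) ∂μ :=
  (ENNReal.le_tsum m).trans (sum_cube_sq_le μ n h)

end MeasureLemmas
lemma exists_n_window {r : ℝ} (hr0 : 0 < r) (hrle : r ≤ (d:ℝ) + 1) :
    ∃ n : ℕ, ((d:ℝ) + 1) * 2 ^ (-(n:ℤ)) ≤ r ∧ r / (2 * ((d:ℝ) + 1)) ≤ 2 ^ (-(n:ℤ)) := by
  classical
  have hd1 : (0:ℝ) < (d:ℝ) + 1 := by positivity
  have hzp : ∀ m : ℕ, (2:ℝ) ^ (-(m:ℤ)) = (1/2 : ℝ) ^ m := by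
    intro m
    rw [zpow_neg, zpow_natCast, one_div, inv_pow]
  have hex : ∃ n : ℕ, ((d:ℝ) + 1) * 2 ^ (-(n:ℤ)) ≤ r := by
    obtain ⟨n, hn⟩ := exists_pow_lt_of_lt_one (div_pos hr0 hd1) (by norm_num : (1/2:ℝ) < 1)
    refine ⟨n, ?_⟩
    rw [hzp]
    rw [lt_div_iff₀ hd1] at hn
    nlinarith
  set n := Nat.find hex with hn
  have h1 := Nat.find_spec hex
  refine ⟨n, h1, ?_⟩
  rcases Nat.eq_zero_or_pos n with h | h
  · rw [h]
    simp only [Nat.cast_zero, neg_zero, zpow_zero]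
    rw [div_le_one (by positivity)]
    linarith
  · obtain ⟨m, hm⟩ : ∃ m, n = m + 1 := ⟨n - 1, by omega⟩
    have h2 : ¬ ((d:ℝ) + 1) * 2 ^ (-(m:ℤ)) ≤ r := Nat.find_min hex (by omega)
    push_neg at h2
    have h3 : (2:ℝ) ^ (-(n:ℤ)) = 2 ^ (-(m:ℤ)) / 2 := by
      rw [hzp, hzp, hm, pow_succ]
      ring
    rw [h3, div_le_div_iff₀ (by positivity) (by norm_num)]
    nlinarith [twopow_pos m]

lemma corrInt_lower (μ : Measure X) [IsProbabilityMeasure μ] :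
    ∃ c : ℝ, 0 < c ∧ c ≤ 1 ∧
      ∀ r : ℝ, 0 < r → r ≤ (d:ℝ) + 1 → c * r ^ (2*d) ≤ corrInt μ r := by
  obtain ⟨j₀, hj₀⟩ := exists_cube_zero_pos μ
  set p := μ (cube 0 j₀) with hp
  have hpt : p ≠ ⊤ := measure_ne_top μ _
  set pR := p.toReal with hpR
  have hpR0 : 0 < pR := ENNReal.toReal_pos hj₀.ne' hpt
  have hpR1 : pR ≤ 1 := by
    rw [hpR, ← ENNReal.toReal_one]
    exact ENNReal.toReal_mono ENNReal.one_ne_top prob_le_one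
  have hd1 : (0:ℝ) < (d:ℝ) + 1 := by positivity
  refine ⟨min 1 (pR ^ 2 * (1 / (2 * ((d:ℝ) + 1))) ^ (2*d)), by positivity, min_le_left _ _,
    ?_⟩
  intro r hr0 hrle
  obtain ⟨n, hn1, hn2⟩ := exists_n_window hr0 hrle
  obtain ⟨m, hm⟩ := exists_sub_cube_le μ n j₀
  have hb0 : ((2:ENNReal) ^ (n*d)) ≠ 0 := by positivity
  have hbt : ((2:ENNReal) ^ (n*d)) ≠ ⊤ := by
    exact ENNReal.pow_ne_top (by norm_num)
  have h1 : p / 2 ^ (n*d) ≤ μ (cube n m) := by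
    rw [ENNReal.div_le_iff_le_mul (Or.inl hb0) (Or.inl hbt), mul_comm]
    exact hm
  have h2 : (p / 2 ^ (n*d)) ^ 2 ≤ ∫⁻ x, μ (closedBall x r) ∂μ :=
    le_trans (pow_le_pow_left' h1 2) (cube_sq_le μ n m hn1)
  have h3 : ((p / 2 ^ (n*d)) ^ 2).toReal ≤ corrInt μ r :=
    ENNReal.toReal_mono (lint_ne_top μ r) h2
  have h4 : ((p / 2 ^ (n*d)) ^ 2).toReal = (pR / 2 ^ (n*d)) ^ 2 := by
    rw [ENNReal.toReal_pow, ENNReal.toReal_div, ENNReal.toReal_pow, ENNReal.toReal_ofNat]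
  rw [h4] at h3
  refine le_trans ?_ h3
  have hq : ((2:ℝ) ^ (n*d))⁻¹ = ((2:ℝ) ^ (-(n:ℤ))) ^ d := by
    have e1 : ((2:ℝ) ^ (-(n:ℤ))) ^ (d:ℕ) = (2:ℝ) ^ ((-(n:ℤ)) * (d:ℤ)) := by
      rw [← zpow_natCast ((2:ℝ) ^ (-(n:ℤ))) d, ← zpow_mul]
    have e2 : (-(n:ℤ)) * (d:ℤ) = -((n*d : ℕ) : ℤ) := by push_cast; ring
    rw [e1, e2, zpow_neg, zpow_natCast]
  have expand : (pR / 2 ^ (n*d)) ^ 2 = pR ^ 2 * (((2:ℝ) ^ (-(n:ℤ))) ^ d) ^ 2 := by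
    rw [div_pow, div_eq_mul_inv, ← hq]
    ring
  rw [expand, ← pow_mul, mul_comm d 2]
  calc min 1 (pR ^ 2 * (1 / (2 * ((d:ℝ) + 1))) ^ (2*d)) * r ^ (2*d)
      ≤ (pR ^ 2 * (1 / (2 * ((d:ℝ) + 1))) ^ (2*d)) * r ^ (2*d) := by
        apply mul_le_mul_of_nonneg_right (min_le_right _ _) (by positivity)
    _ = pR ^ 2 * (r / (2 * ((d:ℝ) + 1))) ^ (2*d) := by
        rw [div_pow, div_pow, one_pow]
        ring
    _ ≤ pR ^ 2 * ((2:ℝ) ^ (-(n:ℤ))) ^ (2*d) := by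
        apply mul_le_mul_of_nonneg_left _ (by positivity)
        exact pow_le_pow_left₀ (by positivity) hn2 _

lemma g_bounds (μ : Measure X) [IsProbabilityMeasure μ] :
    ∀ᶠ r in 𝓝[>] (0:ℝ), 0 ≤ Real.log (corrInt μ r) / Real.log r ∧
      Real.log (corrInt μ r) / Real.log r ≤ 2*(d:ℝ)+2 := by
  obtain ⟨c, hc0, hc1, hlow⟩ := corrInt_lower μ
  have hr₀ : (0:ℝ) < min 1 (Real.sqrt c) := by
    apply lt_min one_pos (Real.sqrt_pos.mpr hc0)
  have hmem : Ioo (0:ℝ) (min 1 (Real.sqrt c)) ∈ 𝓝[>] (0:ℝ) :=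
    Ioo_mem_nhdsGT_of_mem ⟨le_refl 0, hr₀⟩
  filter_upwards [hmem] with r hr
  obtain ⟨hr0, hrlt⟩ := hr
  have hr1 : r < 1 := lt_of_lt_of_le hrlt (min_le_left _ _)
  have hrc : r < Real.sqrt c := lt_of_lt_of_le hrlt (min_le_right _ _)
  have hlogr : Real.log r < 0 := Real.log_neg hr0 hr1
  have hci : 0 < corrInt μ r := corrInt_pos μ hr0
  have hcle : corrInt μ r ≤ 1 := corrInt_le_one μ r
  have hlogc : Real.log (corrInt μ r) ≤ 0 := Real.log_nonpos (le_of_lt hci) hcle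
  constructor
  · exact div_nonneg_iff.mpr (Or.inr ⟨hlogc, le_of_lt hlogr⟩)
  · rw [div_le_iff_of_neg hlogr]
    have hr2 : r ^ 2 < c := (Real.lt_sqrt (le_of_lt hr0)).mp hrc
    have key : r ^ (2*d+2) ≤ corrInt μ r := by
      calc r ^ (2*d+2) = r ^ 2 * r ^ (2*d) := by rw [← pow_add]; ring_nf
        _ ≤ c * r ^ (2*d) := by
            apply mul_le_mul_of_nonneg_right (le_of_lt hr2) (by positivity)
        _ ≤ corrInt μ r := hlow r hr0 (by linarith [Nat.cast_nonneg (α := ℝ) d])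
    have hlog : Real.log (r ^ (2*d+2)) ≤ Real.log (corrInt μ r) :=
      Real.log_le_log (by positivity) key
    rw [Real.log_pow] at hlog
    calc (2*(d:ℝ)+2) * Real.log r = ((2*d+2 : ℕ) : ℝ) * Real.log r := by push_cast; ring
      _ ≤ Real.log (corrInt μ r) := hlog

lemma isBounded_g (μ : Measure X) [IsProbabilityMeasure μ] :
    IsBoundedUnder (· ≤ ·) (𝓝[>] (0:ℝ))
      (fun r => Real.log (corrInt μ r) / Real.log r) :=
  ⟨2*(d:ℝ)+2, eventually_map.mpr (by filter_upwards [g_bounds μ] with r h using h.2)⟩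

lemma isCobounded_g (μ : Measure X) [IsProbabilityMeasure μ] :
    IsCoboundedUnder (· ≤ ·) (𝓝[>] (0:ℝ))
      (fun r => Real.log (corrInt μ r) / Real.log r) := by
  have hb : IsBoundedUnder (· ≥ ·) (𝓝[>] (0:ℝ))
      (fun r => Real.log (corrInt μ r) / Real.log r) :=
    ⟨0, eventually_map.mpr (by filter_upwards [g_bounds μ] with r h using h.1)⟩
  exact hb.isCoboundedUnder_flip

lemma ucod_nonneg (μ : Measure X) [IsProbabilityMeasure μ] : 0 ≤ ucod μ := by
  rw [ucod]
  exact le_limsup_of_frequently_le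
    (((g_bounds μ).mono fun r h => h.1).frequently) (isBounded_g μ)

lemma ucod_le_bound (μ : Measure X) [IsProbabilityMeasure μ] : ucod μ ≤ 2*(d:ℝ)+2 := by
  rw [ucod]
  exact limsup_le_of_le (isCobounded_g μ)
    (by filter_upwards [g_bounds μ] with r h using h.2)

lemma le_ucod_of_cubebound (μ : Measure X) [IsProbabilityMeasure μ] {s : ℝ} (hs : 0 ≤ s)
    (n : ℕ → ℕ) (hmono : StrictMono n) (hpos : ∀ k, 0 < n k)
    (hcube : ∀ (k : ℕ) (j : Fin d → ℤ),
      μ (cube (n k) j) ≤ ENNReal.ofReal ((2:ℝ) ^ (-(n k : ℝ) * s))) :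
    s ≤ ucod μ := by
  have hlog2 : (0:ℝ) < Real.log 2 := Real.log_pos (by norm_num)
  have hg : ∀ k, s - (d:ℝ) * Real.log 3 / ((n k : ℝ) * Real.log 2) ≤
      Real.log (corrInt μ ((2:ℝ) ^ (-(n k : ℤ)))) / Real.log ((2:ℝ) ^ (-(n k : ℤ))) := by
    intro k
    set m := n k with hm
    have hm1 : 1 ≤ m := hpos k
    have hr0 : (0:ℝ) < 2 ^ (-(m:ℤ)) := twopow_pos m
    have hB0 : (0:ℝ) < (2:ℝ) ^ (-(m:ℝ) * s) := Real.rpow_pos_of_pos (by norm_num) _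
    have hL : ∫⁻ x, μ (closedBall x ((2:ℝ) ^ (-(m:ℤ)))) ∂μ ≤
        3 ^ d * ENNReal.ofReal ((2:ℝ) ^ (-(m:ℝ) * s)) := by
      calc ∫⁻ x, μ (closedBall x ((2:ℝ) ^ (-(m:ℤ)))) ∂μ
          ≤ ∫⁻ _x, 3 ^ d * ENNReal.ofReal ((2:ℝ) ^ (-(m:ℝ) * s)) ∂μ :=
            lintegral_mono fun x => measure_closedBall_le μ m x _ (hcube k)
        _ = 3 ^ d * ENNReal.ofReal ((2:ℝ) ^ (-(m:ℝ) * s)) := by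
            rw [lintegral_const, measure_univ, mul_one]
    have hC : corrInt μ ((2:ℝ) ^ (-(m:ℤ))) ≤ 3 ^ d * (2:ℝ) ^ (-(m:ℝ) * s) := by
      rw [corrInt]
      calc (∫⁻ x, μ (closedBall x ((2:ℝ) ^ (-(m:ℤ)))) ∂μ).toReal
          ≤ (3 ^ d * ENNReal.ofReal ((2:ℝ) ^ (-(m:ℝ) * s))).toReal := by
            apply ENNReal.toReal_mono _ hL
            exact ENNReal.mul_ne_top (ENNReal.pow_ne_top (by norm_num))
              ENNReal.ofReal_ne_top
        _ = 3 ^ d * (2:ℝ) ^ (-(m:ℝ) * s) := by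
            rw [ENNReal.toReal_mul, ENNReal.toReal_pow, ENNReal.toReal_ofNat,
              ENNReal.toReal_ofReal (le_of_lt hB0)]
    have hci : 0 < corrInt μ ((2:ℝ) ^ (-(m:ℤ))) := corrInt_pos μ hr0
    have hlogc : Real.log (corrInt μ ((2:ℝ) ^ (-(m:ℤ)))) ≤
        (d:ℝ) * Real.log 3 + (-(m:ℝ) * s) * Real.log 2 := by
      calc Real.log (corrInt μ ((2:ℝ) ^ (-(m:ℤ))))
          ≤ Real.log (3 ^ d * (2:ℝ) ^ (-(m:ℝ) * s)) := Real.log_le_log hci hC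
        _ = (d:ℝ) * Real.log 3 + (-(m:ℝ) * s) * Real.log 2 := by
            rw [Real.log_mul (by positivity) (by positivity), Real.log_pow,
              Real.log_rpow (by norm_num)]
    have hlogr : Real.log ((2:ℝ) ^ (-(m:ℤ))) = -(m:ℝ) * Real.log 2 := by
      rw [Real.log_zpow]
      push_cast
      ring
    have hlogrneg : Real.log ((2:ℝ) ^ (-(m:ℤ))) < 0 := by
      rw [hlogr]
      have : (0:ℝ) < (m:ℝ) := by exact_mod_cast hm1
      nlinarith
    rw [le_div_iff_of_neg hlogrneg, hlogr]
    have hmne : ((m:ℝ)) ≠ 0 := by positivity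
    calc (s - (d:ℝ) * Real.log 3 / ((m:ℝ) * Real.log 2)) * (-(m:ℝ) * Real.log 2)
        = (d:ℝ) * Real.log 3 + (-(m:ℝ) * s) * Real.log 2 := by
          field_simp
          ring
      _ ≥ Real.log (corrInt μ ((2:ℝ) ^ (-(m:ℤ)))) := hlogc
  have hnat : Tendsto (fun k => ((n k : ℝ))) atTop atTop :=
    tendsto_natCast_atTop_atTop.comp hmono.tendsto_atTop
  have tends : Tendsto (fun k => (2:ℝ) ^ (-(n k : ℤ))) atTop (𝓝[>] (0:ℝ)) := by
    apply tendsto_nhdsWithin_of_tendsto_nhds_of_eventually_within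
    · have h1 : Tendsto (fun k => ((1:ℝ)/2) ^ (n k)) atTop (𝓝 0) :=
        (tendsto_pow_atTop_nhds_zero_of_lt_one (by norm_num) (by norm_num)).comp
          hmono.tendsto_atTop
      convert h1 using 2 with k
      rw [zpow_neg, zpow_natCast, one_div, inv_pow]
    · exact Eventually.of_forall fun k => twopow_pos (n k)
  refine le_of_forall_sub_le fun ε hε => ?_
  have hCto : Tendsto (fun k => (d:ℝ) * Real.log 3 / ((n k : ℝ) * Real.log 2)) atTop
      (𝓝 0) :=
    Tendsto.div_atTop tendsto_const_nhds (hnat.atTop_mul_const hlog2)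
  have hev : ∀ᶠ k in atTop, (d:ℝ) * Real.log 3 / ((n k : ℝ) * Real.log 2) < ε :=
    hCto.eventually_lt_const hε
  have hfreqk : ∃ᶠ k in atTop, s - ε ≤
      Real.log (corrInt μ ((2:ℝ) ^ (-(n k : ℤ)))) / Real.log ((2:ℝ) ^ (-(n k : ℤ))) := by
    apply Eventually.frequently
    filter_upwards [hev] with k hk
    linarith [hg k]
  have hfreq : ∃ᶠ r in 𝓝[>] (0:ℝ), s - ε ≤ Real.log (corrInt μ r) / Real.log r :=
    tends.frequently hfreqk
  rw [ucod]
  exact le_limsup_of_frequently_le hfreq (isBounded_g μ)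

lemma freq_corrInt_small (μ : Measure X) [IsProbabilityMeasure μ] {s : ℝ}
    (hs : s < ucod μ) :
    ∃ᶠ r in 𝓝[>] (0:ℝ), 0 < r ∧ r < 1 ∧ corrInt μ r ≤ r ^ s := by
  rw [ucod] at hs
  have hf := frequently_lt_of_lt_limsup (isCobounded_g μ) hs
  have hev : Ioo (0:ℝ) 1 ∈ 𝓝[>] (0:ℝ) := Ioo_mem_nhdsGT_of_mem ⟨le_refl 0, one_pos⟩
  refine (hf.and_eventually hev).mono ?_
  rintro r ⟨hgr, hr0, hr1⟩
  refine ⟨hr0, hr1, ?_⟩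
  have hlogr : Real.log r < 0 := Real.log_neg hr0 hr1
  rw [lt_div_iff_of_neg hlogr] at hgr
  have hci : 0 < corrInt μ r := corrInt_pos μ hr0
  have hrp : (0:ℝ) < r ^ s := Real.rpow_pos_of_pos hr0 _
  have : Real.log (corrInt μ r) < Real.log (r ^ s) := by
    rw [Real.log_rpow hr0]
    linarith [mul_comm s (Real.log r)]
  exact le_of_lt ((Real.log_lt_log_iff hci hrp).mp this)

lemma exists_good_level (μ : Measure X) [IsProbabilityMeasure μ] {s : ℝ}
    (hs : s < ucod μ) (N : ℕ) :
    ∃ m : ℕ, N < m ∧ ∃ r : ℝ, 0 < r ∧ corrInt μ r ≤ r ^ s ∧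
      ((d:ℝ) + 1) * 2 ^ (-(m:ℤ)) ≤ r ∧ r ≤ ((d:ℝ) + 1) * (2 * 2 ^ (-(m:ℤ))) := by
  have hd1 : (0:ℝ) < (d:ℝ) + 1 := by positivity
  have hδ : (0:ℝ) < min 1 (((d:ℝ) + 1) * 2 ^ (-(N:ℤ)-1)) := by
    apply lt_min one_pos
    positivity
  have hev : Ioo (0:ℝ) (min 1 (((d:ℝ) + 1) * 2 ^ (-(N:ℤ)-1))) ∈ 𝓝[>] (0:ℝ) :=
    Ioo_mem_nhdsGT_of_mem ⟨le_refl 0, hδ⟩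
  obtain ⟨r, ⟨hr0, _, hrs⟩, hrI⟩ := ((freq_corrInt_small μ hs).and_eventually hev).exists
  have hrlt : r < ((d:ℝ) + 1) * 2 ^ (-(N:ℤ)-1) := lt_of_lt_of_le hrI.2 (min_le_right _ _)
  have hrle : r ≤ (d:ℝ) + 1 := by
    have h1 : ((2:ℝ)) ^ (-(N:ℤ)-1) ≤ 1 := by
      apply zpow_le_one_of_nonpos₀ (by norm_num)
      omega
    nlinarith
  obtain ⟨m, hm1, hm2⟩ := exists_n_window hr0 hrle
  refine ⟨m, ?_, r, hr0, hrs, hm1, ?_⟩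
  · by_contra hNm
    push_neg at hNm
    have h2 : ((2:ℝ)) ^ (-(m:ℤ)) < 2 ^ (-(N:ℤ)-1) := by
      have := lt_of_le_of_lt hm1 hrlt
      exact (mul_lt_mul_iff_right₀ hd1).mp this
    have h3 : (-(m:ℤ)) < (-(N:ℤ)-1 : ℤ) :=
      (zpow_lt_zpow_iff_right₀ (by norm_num : (1:ℝ) < 2)).mp h2
    omega
  · rw [div_le_iff₀ (by positivity)] at hm2
    nlinarith [hm2]

def badIdx (μ : Measure X) (n : ℕ) (t : ℝ) : Set (Fin d → ℤ) :=
  {j | ENNReal.ofReal ((2:ℝ) ^ (-(n:ℝ) * t)) < μ (cube n j)}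

def badSet (μ : Measure X) (n : ℕ) (t : ℝ) : Set X :=
  ⋃ j ∈ badIdx μ n t, cube n j

lemma measurableSet_badSet (μ : Measure X) (n : ℕ) (t : ℝ) :
    MeasurableSet (badSet μ n t) :=
  MeasurableSet.biUnion (Set.to_countable _) fun _ _ => measurableSet_cube

lemma badSet_bound (μ : Measure X) [IsProbabilityMeasure μ] (n : ℕ) (t : ℝ) {r : ℝ}
    (hr : ((d:ℝ) + 1) * 2 ^ (-(n:ℤ)) ≤ r) :
    μ (badSet μ n t) ≤
      (ENNReal.ofReal ((2:ℝ) ^ (-(n:ℝ) * t)))⁻¹ * ∫⁻ x, μ (closedBall x r) ∂μ := by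
  set e := ENNReal.ofReal ((2:ℝ) ^ (-(n:ℝ) * t)) with he
  have he0 : e ≠ 0 := by
    rw [he]
    simp only [ne_eq, ENNReal.ofReal_eq_zero, not_le]
    exact Real.rpow_pos_of_pos (by norm_num) _
  have heT : e ≠ ⊤ := ENNReal.ofReal_ne_top
  calc μ (badSet μ n t) ≤ ∑' j : badIdx μ n t, μ (cube n (j:Fin d → ℤ)) :=
        measure_biUnion_le μ (Set.to_countable _) _
    _ ≤ ∑' j : badIdx μ n t, e⁻¹ * μ (cube n (j:Fin d → ℤ)) ^ 2 := by
        apply ENNReal.tsum_le_tsum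
        rintro ⟨j, hj⟩
        calc μ (cube n j) = e⁻¹ * e * μ (cube n j) := by
              rw [ENNReal.inv_mul_cancel he0 heT, one_mul]
          _ = e⁻¹ * (e * μ (cube n j)) := mul_assoc _ _ _
          _ ≤ e⁻¹ * (μ (cube n j) * μ (cube n j)) := by
              apply mul_le_mul_right
              exact mul_le_mul_left (le_of_lt hj) _
          _ = e⁻¹ * μ (cube n j) ^ 2 := by rw [sq]
    _ = e⁻¹ * ∑' j : badIdx μ n t, μ (cube n (j:Fin d → ℤ)) ^ 2 := ENNReal.tsum_mul_left
    _ ≤ e⁻¹ * ∑' j : Fin d → ℤ, μ (cube n j) ^ 2 := by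
        apply mul_le_mul_right
        exact ENNReal.tsum_comp_le_tsum_of_injective Subtype.val_injective
          (fun j => μ (cube n j) ^ 2)
    _ ≤ e⁻¹ * ∫⁻ x, μ (closedBall x r) ∂μ :=
        mul_le_mul_right (sum_cube_sq_le μ n hr) _

lemma rpow_pow (a : ℝ) (n : ℕ) : ((2:ℝ) ^ a) ^ n = (2:ℝ) ^ (a * n) := by
  rw [← Real.rpow_natCast ((2:ℝ) ^ a) n, ← Real.rpow_mul (by norm_num)]

lemma zpow_eq_rpow (n : ℕ) : (2:ℝ) ^ (-(n:ℤ)) = (2:ℝ) ^ (-(n:ℝ)) := by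
  rw [← Real.rpow_intCast 2 (-(n:ℤ))]
  norm_num

lemma badSet_bound2 (μ : Measure X) [IsProbabilityMeasure μ] {s t : ℝ} (hs0 : 0 ≤ s)
    (n : ℕ) {r : ℝ}
    (hr0 : 0 < r) (hrs : corrInt μ r ≤ r ^ s)
    (hr1 : ((d:ℝ) + 1) * 2 ^ (-(n:ℤ)) ≤ r) (hr2 : r ≤ ((d:ℝ) + 1) * (2 * 2 ^ (-(n:ℤ)))) :
    μ (badSet μ n t) ≤
      ENNReal.ofReal ((2 * ((d:ℝ) + 1)) ^ s * ((2:ℝ) ^ (-(s - t))) ^ n) := by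
  have hd1 : (0:ℝ) < (d:ℝ) + 1 := by positivity
  have hrsnn : (0:ℝ) ≤ r ^ s := (Real.rpow_pos_of_pos hr0 s).le
  have hL : ∫⁻ x, μ (closedBall x r) ∂μ ≤ ENNReal.ofReal (r ^ s) :=
    (ENNReal.le_ofReal_iff_toReal_le (lint_ne_top μ r) hrsnn).mpr hrs
  have hepos : (0:ℝ) < (2:ℝ) ^ (-(n:ℝ) * t) := Real.rpow_pos_of_pos (by norm_num) _
  have hinv : (ENNReal.ofReal ((2:ℝ) ^ (-(n:ℝ) * t)))⁻¹ =
      ENNReal.ofReal ((2:ℝ) ^ ((n:ℝ) * t)) := by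
    rw [← ENNReal.ofReal_inv_of_pos hepos, ← Real.rpow_neg (by norm_num)]
    ring_nf
  calc μ (badSet μ n t)
      ≤ (ENNReal.ofReal ((2:ℝ) ^ (-(n:ℝ) * t)))⁻¹ * ∫⁻ x, μ (closedBall x r) ∂μ :=
        badSet_bound μ n t hr1
    _ ≤ ENNReal.ofReal ((2:ℝ) ^ ((n:ℝ) * t)) * ENNReal.ofReal (r ^ s) := by
        rw [hinv]
        exact mul_le_mul_right hL _
    _ = ENNReal.ofReal ((2:ℝ) ^ ((n:ℝ) * t) * r ^ s) := by
        rw [ENNReal.ofReal_mul (Real.rpow_pos_of_pos (by norm_num) _).le]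
    _ ≤ ENNReal.ofReal ((2 * ((d:ℝ) + 1)) ^ s * ((2:ℝ) ^ (-(s - t))) ^ n) := by
        apply ENNReal.ofReal_le_ofReal
        have hr2' : r ≤ (2 * ((d:ℝ) + 1)) * 2 ^ (-(n:ℤ)) := by linarith [hr2]
        have hrs2 : r ^ s ≤ ((2 * ((d:ℝ) + 1)) * 2 ^ (-(n:ℤ))) ^ s :=
          Real.rpow_le_rpow hr0.le hr2' hs0
        have hsplit : ((2 * ((d:ℝ) + 1)) * 2 ^ (-(n:ℤ))) ^ s =
            (2 * ((d:ℝ) + 1)) ^ s * (2:ℝ) ^ (-(n:ℝ) * s) := by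
          rw [Real.mul_rpow (by positivity) (by positivity), zpow_eq_rpow,
            ← Real.rpow_mul (by norm_num)]
        calc (2:ℝ) ^ ((n:ℝ) * t) * r ^ s
            ≤ (2:ℝ) ^ ((n:ℝ) * t) * ((2 * ((d:ℝ) + 1)) ^ s * (2:ℝ) ^ (-(n:ℝ) * s)) := by
              rw [← hsplit]
              exact mul_le_mul_of_nonneg_left hrs2 (Real.rpow_pos_of_pos (by norm_num) _).le
          _ = (2 * ((d:ℝ) + 1)) ^ s * ((2:ℝ) ^ ((n:ℝ) * t) * (2:ℝ) ^ (-(n:ℝ) * s)) := by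
              ring
          _ = (2 * ((d:ℝ) + 1)) ^ s * ((2:ℝ) ^ (-(s - t))) ^ n := by
              rw [rpow_pow, ← Real.rpow_add (by norm_num : (0:ℝ) < 2)]
              ring_nf

lemma nat_seq (P : ℕ → Prop) (hP : ∀ N, ∃ m, N < m ∧ P m) (K : ℕ) :
    ∃ f : ℕ → ℕ, K < f 0 ∧ (∀ k, f k < f (k + 1)) ∧ ∀ k, P (f k) := by
  choose g hg1 hg2 using hP
  refine ⟨fun k => Nat.rec (g K) (fun _ ih => g ih) k, hg1 K, fun k => hg1 _, fun k => ?_⟩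
  cases k with
  | zero => exact hg2 K
  | succ k => exact hg2 _

lemma construct (μ : Measure X) [IsProbabilityMeasure μ] {t' t s : ℝ}
    (h0 : 0 ≤ t') (h1 : t' < t) (h2 : t < s) (h3 : s < ucod μ) :
    ∃ ν : Measure X, IsProbabilityMeasure ν ∧ (∀ U : Set X, μ U = 0 → ν U = 0) ∧
      ∃ n : ℕ → ℕ, StrictMono n ∧ (∀ k, 0 < n k) ∧
        ∀ (k : ℕ) (j : Fin d → ℤ),
          ν (cube (n k) j) ≤ ENNReal.ofReal ((2:ℝ) ^ (-(n k : ℝ) * t')) := by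
  classical
  have hs0 : (0:ℝ) ≤ s := by linarith
  set q : ℝ := (2:ℝ) ^ (-(s - t)) with hqdef
  set q' : ℝ := (2:ℝ) ^ (-(t - t')) with hq'def
  have hq0 : 0 < q := Real.rpow_pos_of_pos (by norm_num) _
  have hq1 : q < 1 := Real.rpow_lt_one_of_one_lt_of_neg (by norm_num) (by linarith)
  have hq'0 : 0 < q' := Real.rpow_pos_of_pos (by norm_num) _
  have hq'1 : q' < 1 := Real.rpow_lt_one_of_one_lt_of_neg (by norm_num) (by linarith)
  set B : ℝ := (2 * ((d:ℝ) + 1)) ^ s with hBdef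
  have hB0 : 0 < B := Real.rpow_pos_of_pos (by positivity) _
  have htq : Tendsto (fun k : ℕ => B * (1 - q)⁻¹ * q ^ k) atTop (𝓝 0) := by
    have h := tendsto_pow_atTop_nhds_zero_of_lt_one hq0.le hq1
    have := h.const_mul (B * (1 - q)⁻¹)
    simpa using this
  have htq' : Tendsto (fun k : ℕ => q' ^ k) atTop (𝓝 0) :=
    tendsto_pow_atTop_nhds_zero_of_lt_one hq'0.le hq'1
  obtain ⟨K₀, hK₁, hK₂⟩ := ((htq.eventually_lt_const (by norm_num : (0:ℝ) < 1/2)).and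
    (htq'.eventually_lt_const (by norm_num : (0:ℝ) < 1/2))).exists
  have hP : ∀ N : ℕ, ∃ m : ℕ, N < m ∧ ∃ r : ℝ, 0 < r ∧ corrInt μ r ≤ r ^ s ∧
      ((d:ℝ) + 1) * 2 ^ (-(m:ℤ)) ≤ r ∧ r ≤ ((d:ℝ) + 1) * (2 * 2 ^ (-(m:ℤ))) :=
    fun N => exists_good_level μ h3 N
  obtain ⟨f, hf0, hfsucc, hwin⟩ := nat_seq _ hP K₀
  have hmono : StrictMono f := strictMono_nat_of_lt_succ hfsucc
  have hge : ∀ k, K₀ + 1 + k ≤ f k := by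
    intro k
    induction k with
    | zero => simpa using hf0
    | succ k ih => have := hfsucc k; omega
  have hbadk : ∀ k, μ (badSet μ (f k) t) ≤ ENNReal.ofReal (B * q ^ (f k)) := by
    intro k
    obtain ⟨r, hr0, hrs, hr1, hr2⟩ := hwin k
    exact badSet_bound2 μ hs0 (f k) hr0 hrs hr1 hr2
  set A : Set X := ⋃ k, badSet μ (f k) t with hA
  have hAmeas : MeasurableSet A := MeasurableSet.iUnion fun k => measurableSet_badSet μ _ t
  have hsum : ∑' k : ℕ, ENNReal.ofReal (B * q ^ (f k)) ≤ ENNReal.ofReal (1/2) := by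
    have hterm : ∀ k : ℕ, ENNReal.ofReal (B * q ^ (f k)) ≤
        ENNReal.ofReal ((B * q ^ (K₀ + 1)) * q ^ k) := by
      intro k
      apply ENNReal.ofReal_le_ofReal
      have hle : q ^ (f k) ≤ q ^ (K₀ + 1 + k) :=
        pow_le_pow_of_le_one hq0.le hq1.le (hge k)
      calc B * q ^ (f k) ≤ B * q ^ (K₀ + 1 + k) :=
            mul_le_mul_of_nonneg_left hle hB0.le
        _ = (B * q ^ (K₀ + 1)) * q ^ k := by rw [pow_add]; ring
    have hsummable : Summable (fun k : ℕ => (B * q ^ (K₀ + 1)) * q ^ k) :=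
      (summable_geometric_of_lt_one hq0.le hq1).mul_left _
    calc ∑' k, ENNReal.ofReal (B * q ^ (f k))
        ≤ ∑' k, ENNReal.ofReal ((B * q ^ (K₀ + 1)) * q ^ k) := ENNReal.tsum_le_tsum hterm
      _ = ENNReal.ofReal (∑' k, (B * q ^ (K₀ + 1)) * q ^ k) :=
          (ENNReal.ofReal_tsum_of_nonneg (fun k => by positivity) hsummable).symm
      _ ≤ ENNReal.ofReal (1/2) := by
          apply ENNReal.ofReal_le_ofReal
          rw [tsum_mul_left, tsum_geometric_of_lt_one hq0.le hq1]
          have hq2 : q ^ (K₀ + 1) ≤ q ^ K₀ :=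
            pow_le_pow_of_le_one hq0.le hq1.le (by omega)
          have hinv : (0:ℝ) ≤ (1 - q)⁻¹ := by
            apply inv_nonneg.mpr
            linarith
          calc B * q ^ (K₀ + 1) * (1 - q)⁻¹ ≤ B * q ^ K₀ * (1 - q)⁻¹ := by
                apply mul_le_mul_of_nonneg_right _ hinv
                exact mul_le_mul_of_nonneg_left hq2 hB0.le
            _ = B * (1 - q)⁻¹ * q ^ K₀ := by ring
            _ ≤ 1/2 := hK₁.le
  have hμA : μ A ≤ ENNReal.ofReal (1/2) :=
    le_trans (measure_iUnion_le _) (le_trans (ENNReal.tsum_le_tsum hbadk) hsum)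
  have hhalf : ENNReal.ofReal (1/2 : ℝ) = 2⁻¹ := by
    rw [show (1/2:ℝ) = (2:ℝ)⁻¹ by norm_num, ENNReal.ofReal_inv_of_pos (by norm_num)]
    norm_num
  set F : Set X := Aᶜ with hF
  have hFmeas : MeasurableSet F := hAmeas.compl
  have hμF : (2:ENNReal)⁻¹ ≤ μ F := by
    have hFA : μ F = 1 - μ A := by
      rw [hF, measure_compl hAmeas (measure_ne_top μ A), measure_univ]
    rw [hFA]
    have h12 : (2:ENNReal)⁻¹ = 1 - 2⁻¹ := by
      rw [ENNReal.one_sub_inv_two]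
    rw [h12]
    exact tsub_le_tsub_left (hhalf ▸ hμA) 1
  have hμF0 : μ F ≠ 0 := by
    intro h
    rw [h] at hμF
    simp at hμF
  have hμFT : μ F ≠ ⊤ := measure_ne_top μ F
  refine ⟨(μ F)⁻¹ • μ.restrict F, ⟨?_⟩, ?_, f, hmono, ?_, ?_⟩
  · rw [Measure.smul_apply, Measure.restrict_apply_univ, smul_eq_mul,
      ENNReal.inv_mul_cancel hμF0 hμFT]
  · intro U hU
    have hres : μ.restrict F U ≤ μ U := Measure.restrict_le_self U
    rw [hU] at hres
    rw [Measure.smul_apply, smul_eq_mul, le_zero_iff.mp hres, mul_zero]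
  · intro k
    have := hge k
    omega
  · intro k j
    rw [Measure.smul_apply, smul_eq_mul, Measure.restrict_apply measurableSet_cube]
    by_cases hbad : j ∈ badIdx μ (f k) t
    · have hsub : cube (f k) j ∩ F = ∅ := by
        rw [eq_empty_iff_forall_notMem]
        rintro x ⟨hx1, hx2⟩
        exact hx2 (mem_iUnion.mpr ⟨k, mem_biUnion hbad hx1⟩)
      rw [hsub, measure_empty, mul_zero]
      exact zero_le
    · have hgood : μ (cube (f k) j) ≤ ENNReal.ofReal ((2:ℝ) ^ (-(f k:ℝ) * t)) :=
        not_lt.mp hbad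
      have hinv2 : (μ F)⁻¹ ≤ 2 := by
        calc (μ F)⁻¹ ≤ ((2:ENNReal)⁻¹)⁻¹ := ENNReal.inv_le_inv' hμF
          _ = 2 := inv_inv 2
      calc (μ F)⁻¹ * μ (cube (f k) j ∩ F)
          ≤ (μ F)⁻¹ * μ (cube (f k) j) := mul_le_mul_right (measure_mono inter_subset_left) _
        _ ≤ 2 * ENNReal.ofReal ((2:ℝ) ^ (-(f k:ℝ) * t)) := mul_le_mul' hinv2 hgood
        _ = ENNReal.ofReal (2 * (2:ℝ) ^ (-(f k:ℝ) * t)) := by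
            rw [ENNReal.ofReal_mul (by norm_num : (0:ℝ) ≤ 2), ENNReal.ofReal_ofNat]
        _ ≤ ENNReal.ofReal ((2:ℝ) ^ (-(f k:ℝ) * t')) := by
            apply ENNReal.ofReal_le_ofReal
            have hm := hge k
            have hq'm : q' ^ (f k) ≤ 1/2 :=
              le_trans (pow_le_pow_of_le_one hq'0.le hq'1.le (by omega)) hK₂.le
            have hsplit : (2:ℝ) ^ (-(f k:ℝ) * t) =
                (2:ℝ) ^ (-(f k:ℝ) * t') * q' ^ (f k) := by
              rw [hq'def, rpow_pow, ← Real.rpow_add (by norm_num : (0:ℝ) < 2)]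
              ring_nf
            rw [hsplit]
            have hpos2 : (0:ℝ) < (2:ℝ) ^ (-(f k:ℝ) * t') :=
              Real.rpow_pos_of_pos (by norm_num) _
            nlinarith

lemma S_elem_le (μ : Measure X) [IsProbabilityMeasure μ] {sv : ℝ}
    (n : ℕ → ℕ) (hmono : StrictMono n)
    (hcube : ∀ (k : ℕ) (j : Fin d → ℤ),
      μ (cube (n k) j) ≤ ENNReal.ofReal ((2:ℝ) ^ (-(n k : ℝ) * sv))) : sv ≤ (d:ℝ) := by
  by_contra hlt
  push_neg at hlt
  obtain ⟨j₀, hj₀⟩ := exists_cube_zero_pos μ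
  set pR := (μ (cube 0 j₀)).toReal with hpR
  have hpR0 : 0 < pR := ENNReal.toReal_pos hj₀.ne' (measure_ne_top μ _)
  set qq : ℝ := (2:ℝ) ^ (-(sv - (d:ℝ))) with hqq
  have hqq0 : 0 < qq := Real.rpow_pos_of_pos (by norm_num) _
  have hqq1 : qq < 1 := Real.rpow_lt_one_of_one_lt_of_neg (by norm_num) (by linarith)
  obtain ⟨m₀, hm₀⟩ := ((tendsto_pow_atTop_nhds_zero_of_lt_one hqq0.le
    hqq1).eventually_lt_const hpR0).exists
  set m := n m₀ with hm
  have hmge : m₀ ≤ m := hmono.le_apply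
  have hkey : μ (cube 0 j₀) ≤ 2 ^ (m * d) * ENNReal.ofReal ((2:ℝ) ^ (-(m:ℝ) * sv)) :=
    measure_cube_zero_le μ m j₀ _ (hcube m₀)
  have hne : ((2:ENNReal) ^ (m * d) * ENNReal.ofReal ((2:ℝ) ^ (-(m:ℝ) * sv))) ≠ ⊤ :=
    ENNReal.mul_ne_top (ENNReal.pow_ne_top (by norm_num)) ENNReal.ofReal_ne_top
  have htr : pR ≤ (2:ℝ) ^ (m * d) * (2:ℝ) ^ (-(m:ℝ) * sv) := by
    have h2 := ENNReal.toReal_mono hne hkey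
    rwa [ENNReal.toReal_mul, ENNReal.toReal_pow, ENNReal.toReal_ofNat,
      ENNReal.toReal_ofReal (Real.rpow_pos_of_pos (by norm_num) _).le] at h2
  have heq : (2:ℝ) ^ (m * d) * (2:ℝ) ^ (-(m:ℝ) * sv) = qq ^ m := by
    rw [hqq, rpow_pow]
    have h3 : (2:ℝ) ^ (m * d : ℕ) = (2:ℝ) ^ ((m * d : ℕ) : ℝ) := (Real.rpow_natCast 2 _).symm
    rw [h3, ← Real.rpow_add (by norm_num : (0:ℝ) < 2)]
    congr 1
    push_cast
    ring
  have hfin : qq ^ m ≤ qq ^ m₀ := pow_le_pow_of_le_one hqq0.le hqq1.le hmge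
  rw [heq] at htr
  linarith

end Dyad

theorem stmt2 {d : ℕ} (E : Set (EuclideanSpace ℝ (Fin d))) (hE : MeasurableSet E) :
    ucodSet E = sSup {s : ℝ | 0 ≤ s ∧ ∃ μ ∈ probOn E, ∃ n : ℕ → ℕ,
      StrictMono n ∧ (∀ k, 0 < n k) ∧
      ∀ (k : ℕ) (C : Set (EuclideanSpace ℝ (Fin d))), IsDyadicCube (n k) C →
        μ C ≤ ENNReal.ofReal ((2 : ℝ) ^ (-(n k : ℝ) * s))} := by

  classical
  rcases Set.eq_empty_or_nonempty (probOn E) with hemp | ⟨μ₀, hμ₀⟩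
  · have h1 : ucod '' probOn E = ∅ := by rw [hemp, Set.image_empty]
    have h2 : {s : ℝ | 0 ≤ s ∧ ∃ μ ∈ probOn E, ∃ n : ℕ → ℕ,
        StrictMono n ∧ (∀ k, 0 < n k) ∧
        ∀ (k : ℕ) (C : Set (EuclideanSpace ℝ (Fin d))), IsDyadicCube (n k) C →
          μ C ≤ ENNReal.ofReal ((2 : ℝ) ^ (-(n k : ℝ) * s))} = ∅ := by
      rw [Set.eq_empty_iff_forall_notMem]
      rintro s ⟨-, μ, hμ, -⟩
      rw [hemp] at hμ
      exact hμ
    rw [ucodSet, h1, h2]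
  · haveI hprob₀ : IsProbabilityMeasure μ₀ := hμ₀.1
    set S₁ := {s : ℝ | 0 ≤ s ∧ ∃ μ ∈ probOn E, ∃ n : ℕ → ℕ,
        StrictMono n ∧ (∀ k, 0 < n k) ∧
        ∀ (k : ℕ) (C : Set (EuclideanSpace ℝ (Fin d))), IsDyadicCube (n k) C →
          μ C ≤ ENNReal.ofReal ((2 : ℝ) ^ (-(n k : ℝ) * s))} with hS₁
    have h0S : (0:ℝ) ∈ S₁ := by
      refine ⟨le_refl 0, μ₀, hμ₀, fun k => k + 1, fun a b h => Nat.add_lt_add_right h 1,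
        fun k => Nat.succ_pos k, fun k C hC => ?_⟩
      calc μ₀ C ≤ 1 := prob_le_one
        _ = ENNReal.ofReal ((2:ℝ) ^ (-((k + 1 : ℕ) : ℝ) * 0)) := by
            rw [mul_zero, Real.rpow_zero, ENNReal.ofReal_one]
    have hSbdd : BddAbove S₁ := by
      refine ⟨(d:ℝ), ?_⟩
      rintro sv ⟨hsv0, μ, hμ, n, hmono, hpos, hcube⟩
      haveI := hμ.1
      exact Dyad.S_elem_le μ n hmono (fun k j => hcube k _ ⟨j, rfl⟩)
    have himbdd : BddAbove (ucod '' probOn E) := by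
      refine ⟨2 * (d:ℝ) + 2, ?_⟩
      rintro x ⟨μ, hμ, rfl⟩
      haveI := hμ.1
      exact Dyad.ucod_le_bound μ
    have h0le : (0:ℝ) ≤ sSup S₁ := le_csSup hSbdd h0S
    have him0 : (0:ℝ) ≤ sSup (ucod '' probOn E) :=
      le_trans (Dyad.ucod_nonneg μ₀) (le_csSup himbdd ⟨μ₀, hμ₀, rfl⟩)
    apply le_antisymm
    · rw [ucodSet]
      apply Real.sSup_le _ h0le
      rintro x ⟨μ, hμ, rfl⟩
      haveI := hμ.1
      by_contra hcon
      push_neg at hcon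
      set a := sSup S₁ with ha
      have ha0 : 0 ≤ a := h0le
      have h3' : a + 3 * ((ucod μ - a) / 4) < ucod μ := by linarith
      obtain ⟨ν, hν, hac, n, hmono, hpos, hcube⟩ :=
        Dyad.construct μ (t' := a + (ucod μ - a) / 4) (t := a + 2 * ((ucod μ - a) / 4))
          (s := a + 3 * ((ucod μ - a) / 4)) (by linarith) (by linarith) (by linarith) h3'
      have hmem : a + (ucod μ - a) / 4 ∈ S₁ := by
        refine ⟨by linarith, ν, ⟨hν, ?_⟩, n, hmono, hpos, fun k C hC => ?_⟩
        · intro x hx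
          apply hμ.2
          intro U hUopen hxU hμU
          exact hx U hUopen hxU (hac U hμU)
        · obtain ⟨j, rfl⟩ := hC
          exact hcube k j
      have := le_csSup hSbdd hmem
      rw [← ha] at this
      linarith
    · apply Real.sSup_le
      · rintro sv ⟨hsv0, μ, hμ, n, hmono, hpos, hcube⟩
        haveI := hμ.1
        have h1 : sv ≤ ucod μ :=
          Dyad.le_ucod_of_cubebound μ hsv0 n hmono hpos (fun k j => hcube k _ ⟨j, rfl⟩)
        have h2 : ucod μ ≤ ucodSet E := by
          rw [ucodSet]
          exact le_csSup himbdd ⟨μ, hμ, rfl⟩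
        linarith
      · rw [ucodSet]
        exact him0
end

section
/- There exist constants c_1, c_2 > 0 depending only on d such that for every bounded nonempty set E ⊆ ℝ^d and every r > 0, c_1 · N_r(E)^{-1} ≤ inf_{μ ∈ 𝒫(E)} ∫ μ(B(x,r)) dμ(x) ≤ c_2 · N_r(E)^{-1}, where the integral equals (μ×μ){(x,y) ∈ E×E : |x−y| ≤ r}. -/
open MeasureTheory Metric Filter Set Topology

section Aux

open ENNReal

lemma msupport_compl_null {X : Type*} [MetricSpace X] [MeasurableSpace X] [BorelSpace X]
    [SecondCountableTopology X] (μ : Measure X) : μ (msupport μ)ᶜ = 0 := by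
  apply measure_null_of_locally_null
  intro x hx
  simp only [msupport, mem_compl_iff, mem_setOf_eq, not_forall] at hx
  obtain ⟨U, hU, hxU, hμU⟩ := hx
  push_neg at hμU
  exact ⟨U, mem_nhdsWithin_of_mem_nhds (hU.mem_nhds hxU), hμU⟩

lemma diam_ball_le' {X : Type*} [MetricSpace X] (c : X) {r : ℝ} (hr : 0 < r) :
    EMetric.diam (ball c (r/2)) ≤ ENNReal.ofReal r := by
  refine EMetric.diam_le fun x hx y hy => ?_
  rw [edist_le_ofReal hr.le]
  rw [mem_ball] at hx hy
  calc dist x y ≤ dist x c + dist c y := dist_triangle _ _ _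
  _ ≤ r/2 + r/2 := by rw [dist_comm c y]; linarith [hx.le, hy.le]
  _ = r := by ring

lemma coverNum_spec {X : Type*} [MetricSpace X] [ProperSpace X] {E : Set X}
    (hE : Bornology.IsBounded E) {r : ℝ} (hr : 0 < r) :
    ∃ 𝒰 : Finset (Set X), 𝒰.card = coverNum E r ∧
      (∀ U ∈ 𝒰, EMetric.diam U ≤ ENNReal.ofReal r) ∧ E ⊆ ⋃ U ∈ 𝒰, U := by
  classical
  have hne : {n : ℕ | ∃ 𝒰 : Finset (Set X), 𝒰.card = n ∧
      (∀ U ∈ 𝒰, EMetric.diam U ≤ ENNReal.ofReal r) ∧ E ⊆ ⋃ U ∈ 𝒰, U}.Nonempty := by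
    have htb : TotallyBounded E :=
      (hE.isCompact_closure.totallyBounded).subset subset_closure
    obtain ⟨t, htfin, htcov⟩ := (Metric.totallyBounded_iff.mp htb) (r/2) (by positivity)
    refine ⟨_, htfin.toFinset.image (fun y => ball y (r/2)), rfl, ?_, ?_⟩
    · intro U hU
      simp only [Finset.mem_image] at hU
      obtain ⟨y, _, rfl⟩ := hU
      exact diam_ball_le' y hr
    · intro x hx
      obtain ⟨y, hy, hxy⟩ := by simpa using htcov hx
      exact mem_biUnion (Finset.mem_image_of_mem _ (htfin.mem_toFinset.mpr hy)) hxy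
  exact Nat.sInf_mem hne

lemma coverNum_le {X : Type*} [MetricSpace X] {E : Set X} {r : ℝ} (𝒰 : Finset (Set X))
    (hdiam : ∀ U ∈ 𝒰, EMetric.diam U ≤ ENNReal.ofReal r) (hcov : E ⊆ ⋃ U ∈ 𝒰, U) :
    coverNum E r ≤ 𝒰.card :=
  Nat.sInf_le ⟨𝒰, rfl, hdiam, hcov⟩

lemma lower_bound {X : Type*} [MetricSpace X] [MeasurableSpace X] [BorelSpace X]
    [SecondCountableTopology X] {E : Set X} {r : ℝ} (hr : 0 < r) {N : ℕ} (hN : 0 < N)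
    (𝒰 : Finset (Set X)) (hcard : 𝒰.card = N)
    (hdiam : ∀ U ∈ 𝒰, EMetric.diam U ≤ ENNReal.ofReal r)
    (hcov : E ⊆ ⋃ U ∈ 𝒰, U) (μ : Measure X) (hμ : μ ∈ probOn E) :
    ((N : ℝ))⁻¹ ≤ corrInt μ r := by
  classical
  haveI hprob : IsProbabilityMeasure μ := hμ.1
  set l := 𝒰.toList with hl
  have hlen : l.length = N := by rw [hl, Finset.length_toList, hcard]
  set V : ℕ → Set X := fun n => closure (l.getD n ∅) with hV
  have hVmeas : ∀ n, MeasurableSet (V n) := fun n => isClosed_closure.measurableSet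
  have hVdiam : ∀ n, EMetric.diam (V n) ≤ ENNReal.ofReal r := by
    intro n
    rw [hV]
    simp only
    rw [show EMetric.diam (closure (l.getD n ∅)) = EMetric.diam (l.getD n ∅) from EMetric.diam_closure _]
    rcases lt_or_ge n l.length with h | h
    · rw [List.getD_eq_getElem l ∅ h]
      exact hdiam _ (Finset.mem_toList.mp (List.getElem_mem _))
    · rw [List.getD_eq_default l ∅ h]
      exact (EMetric.diam_empty : EMetric.diam (∅ : Set X) = 0).trans_le bot_le
  have hVempty : ∀ n, N ≤ n → V n = ∅ := by
    intro n hn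
    rw [hV]
    simp only
    rw [List.getD_eq_default l ∅ (by omega), closure_empty]
  set W : ℕ → Set X := disjointed V with hW
  have hWmeas : ∀ n, MeasurableSet (W n) := MeasurableSet.disjointed hVmeas
  have hWsub : ∀ n, W n ⊆ V n := disjointed_subset V
  -- the support is covered
  have hsupcov : msupport μ ⊆ ⋃ n, W n := by
    rw [hW, iUnion_disjointed]
    intro x hx
    obtain ⟨U, hU, hxU⟩ := by simpa using hcov (hμ.2 hx)
    obtain ⟨n, hn, hgn⟩ := List.mem_iff_getElem.mp (Finset.mem_toList.mpr hU)
    refine mem_iUnion.mpr ⟨n, ?_⟩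
    rw [hV]
    simp only
    rw [List.getD_eq_getElem l ∅ hn, hgn]
    exact subset_closure hxU
  -- total mass
  have key1 : 1 ≤ ∑ n ∈ Finset.range N, μ (W n) := by
    have h1 : (1 : ENNReal) = μ univ := (measure_univ).symm
    have h2 : μ univ ≤ μ (⋃ n, W n) + μ (msupport μ)ᶜ := by
      refine le_trans (measure_mono ?_) (measure_union_le _ _)
      intro x _
      by_cases hx : x ∈ msupport μ
      · exact Or.inl (hsupcov hx)
      · exact Or.inr hx
    rw [msupport_compl_null, add_zero] at h2
    have h3 : μ (⋃ n, W n) = ∑' n, μ (W n) :=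
      measure_iUnion (disjoint_disjointed V) hWmeas
    have h4 : ∑' n, μ (W n) = ∑ n ∈ Finset.range N, μ (W n) := by
      refine tsum_eq_sum ?_
      intro n hn
      have : W n = ∅ := eq_empty_of_subset_empty
        ((hVempty n (by simpa using hn)) ▸ hWsub n)
      simp [this]
    rw [h1]
    calc μ univ ≤ μ (⋃ n, W n) := h2
      _ = _ := by rw [h3, h4]
  -- pointwise bound
  have key2 : ∀ x, ∑ n ∈ Finset.range N, (W n).indicator (fun _ => μ (W n)) x
      ≤ μ (closedBall x r) := by
    intro x
    by_cases hx : ∃ m ∈ Finset.range N, x ∈ W m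
    · obtain ⟨m, hm, hxm⟩ := hx
      have hsum : ∑ n ∈ Finset.range N, (W n).indicator (fun _ => μ (W n)) x = μ (W m) := by
        rw [Finset.sum_eq_single_of_mem m hm]
        · exact indicator_of_mem hxm _
        · intro n _ hn
          refine indicator_of_notMem ?_ _
          exact fun hxn => (disjoint_disjointed V hn).le_bot ⟨hxn, hxm⟩
      rw [hsum]
      refine measure_mono ?_
      intro y hy
      rw [mem_closedBall, dist_comm, ← edist_le_ofReal hr.le]
      exact le_trans (EMetric.edist_le_of_diam_le (hWsub m hxm) (hWsub m hy) (hVdiam m)) le_rfl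
    · push_neg at hx
      rw [Finset.sum_eq_zero fun n hn => indicator_of_notMem (hx n hn) _]
      exact bot_le
  -- integral bound
  have key3 : ∑ n ∈ Finset.range N, μ (W n) * μ (W n) ≤ ∫⁻ x, μ (closedBall x r) ∂μ := by
    have : ∑ n ∈ Finset.range N, μ (W n) * μ (W n)
        = ∫⁻ x, ∑ n ∈ Finset.range N, (W n).indicator (fun _ => μ (W n)) x ∂μ := by
      rw [lintegral_finset_sum _ (fun n _ => measurable_const.indicator (hWmeas n))]
      refine Finset.sum_congr rfl fun n _ => ?_
      rw [lintegral_indicator (hWmeas n), setLIntegral_const, mul_comm]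
    rw [this]
    exact lintegral_mono key2
  have hfin : ∫⁻ x, μ (closedBall x r) ∂μ ≤ 1 := by
    calc ∫⁻ x, μ (closedBall x r) ∂μ ≤ ∫⁻ _, 1 ∂μ :=
      lintegral_mono fun x => prob_le_one
    _ = 1 := by simp
  -- Cauchy–Schwarz
  set a : ℕ → ℝ := fun n => (μ (W n)).toReal with ha
  have hμfin : ∀ n, μ (W n) ≠ ⊤ := fun n => (measure_lt_top μ _).ne
  have hsumfin : ∑ n ∈ Finset.range N, μ (W n) ≠ ⊤ :=
    (ENNReal.sum_lt_top.mpr fun n _ => measure_lt_top μ _).ne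
  have hsa : 1 ≤ ∑ n ∈ Finset.range N, a n := by
    have := ENNReal.toReal_mono hsumfin key1
    rwa [ENNReal.toReal_one, ENNReal.toReal_sum (fun n _ => hμfin n)] at this
  have hcs : (1 : ℝ) ≤ (N : ℝ) * ∑ n ∈ Finset.range N, (a n) ^ 2 := by
    have h1 : (1:ℝ) ≤ (∑ n ∈ Finset.range N, a n) ^ 2 :=
      by nlinarith [hsa]
    have h2 := sq_sum_le_card_mul_sum_sq (s := Finset.range N) (f := a)
    rw [Finset.card_range] at h2
    exact le_trans h1 h2
  have hNpos : (0:ℝ) < N := by exact_mod_cast hN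
  have hfinal : ((N:ℝ))⁻¹ ≤ ∑ n ∈ Finset.range N, (a n) ^ 2 := by
    rw [inv_le_iff_one_le_mul₀ hNpos]
    linarith [hcs]
  have hsq : ∑ n ∈ Finset.range N, (a n) ^ 2
      = (∑ n ∈ Finset.range N, μ (W n) * μ (W n)).toReal := by
    rw [ENNReal.toReal_sum (fun n _ => ENNReal.mul_ne_top (hμfin n) (hμfin n))]
    refine Finset.sum_congr rfl fun n _ => ?_
    rw [ENNReal.toReal_mul, ha, sq]
  rw [hsq] at hfinal
  refine le_trans hfinal ?_
  exact ENNReal.toReal_mono (lt_of_le_of_lt hfin (by norm_num)).ne key3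

lemma doubling (d : ℕ) : ∃ C : ℕ, 0 < C ∧ ∀ (x : EuclideanSpace ℝ (Fin d)) (r : ℝ), 0 < r →
    ∃ 𝒱 : Finset (Set (EuclideanSpace ℝ (Fin d))), 𝒱.card ≤ C ∧
      (∀ U ∈ 𝒱, EMetric.diam U ≤ ENNReal.ofReal r) ∧ closedBall x r ⊆ ⋃ U ∈ 𝒱, U := by
  classical
  obtain ⟨t, htfin, htcov⟩ :=
    Metric.totallyBounded_iff.mp
      (isCompact_closedBall (0 : EuclideanSpace ℝ (Fin d)) 1).totallyBounded
      (1/4) (by norm_num)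
  refine ⟨max htfin.toFinset.card 1, lt_of_lt_of_le Nat.one_pos (le_max_right _ _), ?_⟩
  intro x r hr
  refine ⟨htfin.toFinset.image (fun y => ball (x + r • y) (r/2)), ?_, ?_, ?_⟩
  · exact le_trans (Finset.card_image_le) (le_max_left _ _)
  · intro U hU
    obtain ⟨y, _, rfl⟩ := Finset.mem_image.mp hU
    exact diam_ball_le' _ hr
  · intro z hz
    have hv : r⁻¹ • (z - x) ∈ closedBall (0 : EuclideanSpace ℝ (Fin d)) 1 := by
      rw [mem_closedBall, dist_zero_right, norm_smul, norm_inv, Real.norm_eq_abs,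
        abs_of_pos hr]
      rw [mem_closedBall, dist_eq_norm] at hz
      rw [inv_mul_le_iff₀ hr]
      linarith [hz]
    obtain ⟨y, hy, hvy⟩ := by simpa using htcov hv
    refine mem_biUnion (Finset.mem_image_of_mem _ (htfin.mem_toFinset.mpr hy)) ?_
    rw [mem_ball]
    have : dist z (x + r • y) = r * dist (r⁻¹ • (z - x)) y := by
      rw [dist_eq_norm, dist_eq_norm, ← norm_smul_of_nonneg hr.le, smul_sub,
        smul_inv_smul₀ hr.ne']
      congr 1
      abel
    rw [this]
    calc r * dist (r⁻¹ • (z - x)) y < r * (1/4) := by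
          exact mul_lt_mul_of_pos_left (by rw [show (1:ℝ)/4 = 4⁻¹ by norm_num]; exact hvy) hr
    _ < r/2 := by linarith

lemma upper_bound {X : Type*} [MetricSpace X] [MeasurableSpace X] [BorelSpace X]
    {E : Set X} (hne : E.Nonempty) {r : ℝ} (hr : 0 < r) {C : ℕ} (hC : 0 < C)
    {N : ℕ} (hN : 0 < N) (hpos : 0 < coverNum E r)
    (𝒰₀ : Finset (Set X)) (hcard : 𝒰₀.card = N)
    (hdiam : ∀ U ∈ 𝒰₀, EMetric.diam U ≤ ENNReal.ofReal r)
    (hcov : E ⊆ ⋃ U ∈ 𝒰₀, U)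
    (hdb : ∀ (x : X), ∃ 𝒱 : Finset (Set X), 𝒱.card ≤ C ∧
      (∀ U ∈ 𝒱, EMetric.diam U ≤ ENNReal.ofReal r) ∧ closedBall x r ⊆ ⋃ U ∈ 𝒱, U) :
    ∃ μ ∈ probOn E, corrInt μ r ≤ (C : ℝ) * ((coverNum E r : ℝ))⁻¹ := by
  classical
  obtain ⟨x₀, hx₀⟩ := hne
  -- the family of separated cardinalities
  set A : Set ℕ := {n : ℕ | ∃ T : Finset X, ↑T ⊆ E ∧
    (∀ x ∈ T, ∀ y ∈ T, x ≠ y → r < dist x y) ∧ T.card = n} with hA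
  have hAne : A.Nonempty := ⟨1, {x₀}, by simpa using hx₀, by simp, by simp⟩
  have hAbdd : BddAbove A := by
    refine ⟨N, fun n hn => ?_⟩
    obtain ⟨T, hTE, hTsep, hTcard⟩ := hn
    rw [← hTcard, ← hcard]
    set f : X → Set X := fun t =>
      if h : ∃ U ∈ 𝒰₀, t ∈ U then h.choose else ∅ with hf
    have hfmem : ∀ t ∈ T, f t ∈ 𝒰₀ ∧ t ∈ f t := by
      intro t ht
      have h : ∃ U ∈ 𝒰₀, t ∈ U := by simpa using hcov (hTE ht)
      rw [hf]
      simp only [dif_pos h]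
      exact ⟨h.choose_spec.1, h.choose_spec.2⟩
    refine Finset.card_le_card_of_injOn f (fun t ht => (hfmem t ht).1) ?_
    intro t₁ ht₁ t₂ ht₂ hf12
    by_contra hne12
    have h1 := (hfmem t₁ ht₁).2
    have h2 := (hfmem t₂ ht₂).2
    rw [hf12] at h1
    have : dist t₁ t₂ ≤ r := by
      rw [← edist_le_ofReal hr.le]
      exact EMetric.edist_le_of_diam_le h1 h2 (hdiam _ (hfmem t₂ ht₂).1)
    exact absurd this (not_le.mpr (hTsep t₁ (Finset.mem_coe.mp ht₁) t₂ ht₂ hne12))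
  set M : ℕ := sSup A with hM
  obtain ⟨T, hTE, hTsep, hTcard⟩ : M ∈ A := Nat.sSup_mem hAne hAbdd
  have hM1 : 1 ≤ M := le_csSup hAbdd hAne.choose_spec |> fun _ => le_csSup hAbdd
    (show (1:ℕ) ∈ A from ⟨{x₀}, by simpa using hx₀, by simp, by simp⟩)
  -- maximality gives a cover by closed balls
  have hTcov : ∀ y ∈ E, ∃ t ∈ T, dist y t ≤ r := by
    intro y hy
    by_contra hcon
    push_neg at hcon
    have hyT : y ∉ T := fun hyT => absurd (hcon y hyT) (by simp [hr.le])
    have : M + 1 ∈ A := by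
      refine ⟨insert y T, ?_, ?_, by rw [Finset.card_insert_of_notMem hyT, hTcard]⟩
      · intro z hz
        rcases Finset.mem_insert.mp hz with rfl | hz
        · exact hy
        · exact hTE hz
      · intro a ha b hb hab
        rcases Finset.mem_insert.mp ha with ha' | ha' <;>
          rcases Finset.mem_insert.mp hb with hb' | hb'
        · exact absurd (ha'.trans hb'.symm) hab
        · subst ha'; exact hcon b hb'
        · subst hb'; rw [dist_comm]; exact hcon a ha'
        · exact hTsep a ha' b hb' hab
    have := le_csSup hAbdd this
    omega
  -- cover number bound : N ≤ M * C
  have hNMC : coverNum E r ≤ M * C := by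
    set g : X → Finset (Set X) := fun t => (hdb t).choose with hg
    have hgspec : ∀ t, (g t).card ≤ C ∧ (∀ U ∈ g t, EMetric.diam U ≤ ENNReal.ofReal r) ∧
        closedBall t r ⊆ ⋃ U ∈ g t, U := fun t => (hdb t).choose_spec
    refine le_trans (coverNum_le (T.biUnion g) ?_ ?_) ?_
    · intro U hU
      obtain ⟨t, _, hUt⟩ := Finset.mem_biUnion.mp hU
      exact (hgspec t).2.1 U hUt
    · intro y hy
      obtain ⟨t, htT, hyt⟩ := hTcov y hy
      obtain ⟨U, hU, hyU⟩ := by simpa using (hgspec t).2.2 (mem_closedBall.mpr hyt)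
      exact mem_biUnion (Finset.mem_biUnion.mpr ⟨t, htT, hU⟩) hyU
    · calc (T.biUnion g).card ≤ ∑ t ∈ T, (g t).card := Finset.card_biUnion_le
      _ ≤ ∑ _t ∈ T, C := Finset.sum_le_sum fun t _ => (hgspec t).1
      _ = M * C := by rw [Finset.sum_const, hTcard, smul_eq_mul]
  -- the uniform measure on T
  set μ : Measure X := ((M : ENNReal))⁻¹ • ∑ t ∈ T, Measure.dirac t with hμdef
  have hMne : (M : ENNReal) ≠ 0 := by
    simp only [ne_eq, Nat.cast_eq_zero]; omega
  have hMnetop : (M : ENNReal) ≠ ⊤ := ENNReal.natCast_ne_top M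
  have hμuniv : μ univ = 1 := by
    rw [hμdef, Measure.smul_apply, Measure.finset_sum_apply]
    simp only [measure_univ]
    rw [Finset.sum_const, hTcard, smul_eq_mul]
    simp only [nsmul_eq_mul, mul_one]
    exact ENNReal.inv_mul_cancel hMne hMnetop
  have hprob : IsProbabilityMeasure μ := ⟨hμuniv⟩
  have hsupp : msupport μ ⊆ E := by
    intro x hx
    by_contra hxE
    have hxT : x ∉ (T : Set X) := fun h => hxE (hTE h)
    refine hx (↑T)ᶜ (T.finite_toSet.isClosed.isOpen_compl) hxT ?_
    rw [hμdef, Measure.smul_apply, Measure.finset_sum_apply]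
    have : ∀ t ∈ T, Measure.dirac t ((T : Set X)ᶜ) = 0 := by
      intro t ht
      rw [Measure.dirac_apply]
      exact indicator_of_notMem (by simp [ht]) _
    rw [Finset.sum_congr rfl this]
    simp
  -- value of each ball
  have hball : ∀ t ∈ T, μ (closedBall t r) = ((M : ENNReal))⁻¹ := by
    intro t ht
    rw [hμdef, Measure.smul_apply, Measure.finset_sum_apply]
    rw [Finset.sum_eq_single_of_mem t ht]
    · rw [Measure.dirac_apply_of_mem (mem_closedBall_self hr.le), smul_eq_mul, mul_one]
    · intro s hs hst
      rw [Measure.dirac_apply]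
      refine indicator_of_notMem (fun hmem => ?_) _
      exact absurd (mem_closedBall.mp hmem) (not_le.mpr (hTsep s hs t ht hst))
  -- compute the correlation integral
  have hcorr : corrInt μ r = ((M : ℝ))⁻¹ := by
    have : ∫⁻ x, μ (closedBall x r) ∂μ = ((M : ENNReal))⁻¹ := by
      rw [hμdef]
      rw [lintegral_smul_measure, lintegral_finset_sum_measure]
      have : ∀ t ∈ T, ∫⁻ x, μ (closedBall x r) ∂(Measure.dirac t) = ((M : ENNReal))⁻¹ := by
        intro t ht
        rw [lintegral_dirac]
        exact hball t ht
      rw [Finset.sum_congr rfl this, Finset.sum_const, hTcard, nsmul_eq_mul, smul_eq_mul,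
        ← mul_assoc, ENNReal.inv_mul_cancel hMne hMnetop, one_mul]
    rw [corrInt, this, ENNReal.toReal_inv]
    simp
  refine ⟨μ, ⟨hprob, hsupp⟩, ?_⟩
  rw [hcorr]
  have hMpos : (0:ℝ) < M := by exact_mod_cast hM1
  have hNpos : (0:ℝ) < (coverNum E r : ℝ) := by exact_mod_cast hpos
  have hcast : (coverNum E r : ℝ) ≤ (C:ℝ) * (M:ℝ) := by
    have : coverNum E r ≤ C * M := by rw [Nat.mul_comm]; exact hNMC
    exact_mod_cast this
  have hCpos : (0:ℝ) < C := by exact_mod_cast hC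
  calc ((M:ℝ))⁻¹ = (C:ℝ) * (((C:ℝ) * (M:ℝ))⁻¹) := by field_simp
  _ ≤ (C:ℝ) * ((coverNum E r : ℝ))⁻¹ := by gcongr

end Aux

theorem stmt3 (d : ℕ) :
    ∃ c₁ c₂ : ℝ, 0 < c₁ ∧ 0 < c₂ ∧
      ∀ E : Set (EuclideanSpace ℝ (Fin d)), Bornology.IsBounded E → E.Nonempty →
      ∀ r : ℝ, 0 < r →
        c₁ * ((coverNum E r : ℝ))⁻¹ ≤ sInf ((fun μ => corrInt μ r) '' probOn E) ∧
        sInf ((fun μ => corrInt μ r) '' probOn E) ≤ c₂ * ((coverNum E r : ℝ))⁻¹ := by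
  obtain ⟨C, hC, hdb⟩ := doubling d
  refine ⟨1, C, one_pos, by exact_mod_cast hC, ?_⟩
  intro E hE hne r hr
  obtain ⟨𝒰₀, hcard, hdiam, hcov⟩ := coverNum_spec hE hr
  have hN : 0 < coverNum E r := by
    rcases Nat.eq_zero_or_pos (coverNum E r) with h | h
    · exfalso
      obtain ⟨x, hx⟩ := hne
      have h0 : 𝒰₀ = ∅ := Finset.card_eq_zero.mp (hcard.trans h)
      have := hcov hx
      rw [h0] at this
      simpa using this
    · exact h
  obtain ⟨x₀, hx₀⟩ := hne
  have hdirac : Measure.dirac x₀ ∈ probOn E := by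
    refine ⟨inferInstance, ?_⟩
    intro x hx
    by_cases hxx : x = x₀
    · rwa [hxx]
    · exfalso
      refine hx {x₀}ᶜ isOpen_compl_singleton hxx ?_
      rw [Measure.dirac_apply]
      exact indicator_of_notMem (by simp) _
  have himg : ((fun μ => corrInt μ r) '' probOn E).Nonempty :=
    ⟨corrInt (Measure.dirac x₀) r, Measure.dirac x₀, hdirac, rfl⟩
  have hbdd : BddBelow ((fun μ => corrInt μ r) '' probOn E) := by
    refine ⟨0, ?_⟩
    rintro b ⟨μ, _, rfl⟩
    exact ENNReal.toReal_nonneg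
  constructor
  · rw [one_mul]
    refine le_csInf himg ?_
    rintro b ⟨μ, hμ, rfl⟩
    exact_mod_cast lower_bound hr hN 𝒰₀ hcard hdiam hcov μ hμ
  · obtain ⟨μ, hμ, hle⟩ :=
      upper_bound ⟨x₀, hx₀⟩ hr hC hN hN 𝒰₀ hcard hdiam hcov (fun x => hdb x r hr)
    exact le_trans (csInf_le hbdd ⟨μ, hμ, rfl⟩) hle
end

section
/- Let E ⊆ ℝ^d be bounded, nonempty and Borel. Then the lower box-counting dimension satisfies lbd E = liminf_{r→0} log( inf_{μ ∈ 𝒫(E)} ∫ μ(B(x,r)) dμ(x) ) / log r, and the upper box-counting dimension satisfies ubd E = limsup_{r→0} log( inf_{μ ∈ 𝒫(E)} ∫ μ(B(x,r)) dμ(x) ) / log r. -/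
open MeasureTheory Metric Filter Set Topology
open scoped ENNReal NNReal

section aux

variable {X : Type*} [MetricSpace X]

noncomputable local instance : DecidableEq (Set X) := fun _ _ => Classical.dec _

lemma aux_diam_le {s : Set X} {r : ℝ} (hr : 0 ≤ r)
    (h : ∀ x ∈ s, ∀ y ∈ s, dist x y ≤ r) : EMetric.diam s ≤ ENNReal.ofReal r :=
  EMetric.diam_le fun x hx y hy => by
    rw [edist_dist]; exact ENNReal.ofReal_le_ofReal (h x hx y hy)

lemma aux_coverSet_nonempty [ProperSpace X] {E : Set X} (hb : Bornology.IsBounded E)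
    {r : ℝ} (hr : 0 < r) :
    {n : ℕ | ∃ 𝒰 : Finset (Set X), 𝒰.card = n ∧
      (∀ U ∈ 𝒰, EMetric.diam U ≤ ENNReal.ofReal r) ∧ E ⊆ ⋃ U ∈ 𝒰, U}.Nonempty := by
  have htb : TotallyBounded E := by
    have h1 : IsCompact (closure E) := hb.isCompact_closure
    exact (h1.totallyBounded).subset subset_closure
  obtain ⟨t, htf, htc⟩ := totallyBounded_iff.1 htb (r/2) (half_pos hr)
  refine ⟨(htf.toFinset.image (fun y => ball y (r/2))).card, _, rfl, ?_, ?_⟩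
  · intro U hU
    simp only [Finset.mem_image, Set.Finite.mem_toFinset] at hU
    obtain ⟨y, -, rfl⟩ := hU
    refine aux_diam_le hr.le fun a ha b hb => ?_
    have := dist_triangle a y b
    rw [mem_ball] at ha hb
    rw [dist_comm y b] at this
    linarith
  · intro x hx
    obtain ⟨y, hy, hxy⟩ := by simpa using htc hx
    simp only [Set.mem_iUnion, Finset.mem_image, Set.Finite.mem_toFinset]
    exact ⟨ball y (r/2), ⟨y, hy, rfl⟩, by simpa using hxy⟩

lemma aux_coverNum_spec [ProperSpace X] {E : Set X} (hb : Bornology.IsBounded E)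
    {r : ℝ} (hr : 0 < r) :
    ∃ 𝒰 : Finset (Set X), 𝒰.card = coverNum E r ∧
      (∀ U ∈ 𝒰, EMetric.diam U ≤ ENNReal.ofReal r) ∧ E ⊆ ⋃ U ∈ 𝒰, U := by
  have := Nat.sInf_mem (aux_coverSet_nonempty hb hr)
  obtain ⟨𝒰, h1, h2, h3⟩ := this
  exact ⟨𝒰, h1, h2, h3⟩

lemma aux_coverNum_pos [ProperSpace X] {E : Set X} (hb : Bornology.IsBounded E)
    (hne : E.Nonempty) {r : ℝ} (hr : 0 < r) : 0 < coverNum E r := by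
  obtain ⟨𝒰, h1, -, h3⟩ := aux_coverNum_spec hb hr
  rcases Nat.eq_zero_or_pos (coverNum E r) with h | h
  swap
  · exact h
  · exfalso
    rw [h, Finset.card_eq_zero] at h1
    subst h1
    obtain ⟨x, hx⟩ := hne
    simpa using h3 hx

lemma aux_coverNum_le_card {E : Set X} {r : ℝ} {𝒰 : Finset (Set X)}
    (h2 : ∀ U ∈ 𝒰, EMetric.diam U ≤ ENNReal.ofReal r) (h3 : E ⊆ ⋃ U ∈ 𝒰, U) :
    coverNum E r ≤ 𝒰.card :=
  Nat.sInf_le ⟨𝒰, rfl, h2, h3⟩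

end aux
section euc

variable {d : ℕ}

local notation "Xd" => EuclideanSpace ℝ (Fin d)

noncomputable local instance : DecidableEq (Set Xd) := fun _ _ => Classical.dec _
noncomputable local instance : DecidableEq Xd := fun _ _ => Classical.dec _

/-- volume bound for separated finite sets -/
lemma aux_sep_vol {E : Set Xd} {x0 : Xd} {R : ℝ} (hER : E ⊆ closedBall x0 R)
    {r : ℝ} (hr : 0 < r) (hr1 : r ≤ 1) {s : Finset Xd} (hsE : ↑s ⊆ E)
    (hsep : ∀ x ∈ s, ∀ y ∈ s, x ≠ y → r < dist x y) :
    (s.card : ℝ≥0∞) * volume (closedBall (0:Xd) (r/2)) ≤ volume (closedBall x0 (R+1)) := by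
  have hdisj : (↑s : Set Xd).PairwiseDisjoint (fun y => closedBall y (r/2)) := by
    intro x hx y hy hxy
    apply closedBall_disjoint_closedBall
    have := hsep x hx y hy hxy
    linarith
  have hmeas : ∀ b ∈ s, MeasurableSet (closedBall b (r/2)) :=
    fun b _ => measurableSet_closedBall
  have h1 : volume (⋃ y ∈ s, closedBall y (r/2)) = ∑ y ∈ s, volume (closedBall y (r/2)) :=
    measure_biUnion_finset hdisj hmeas
  have h2 : ∀ y ∈ s, volume (closedBall y (r/2)) = volume (closedBall (0:Xd) (r/2)) :=
    fun y _ => Measure.addHaar_closedBall_center volume y (r/2)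
  have h3 : (⋃ y ∈ s, closedBall y (r/2)) ⊆ closedBall x0 (R+1) := by
    intro z hz
    simp only [Set.mem_iUnion] at hz
    obtain ⟨y, hy, hzy⟩ := hz
    have hyE : y ∈ E := hsE hy
    have hyR : dist y x0 ≤ R := hER hyE
    have : dist z y ≤ r/2 := mem_closedBall.1 hzy
    have := dist_triangle z y x0
    rw [mem_closedBall]
    linarith
  calc (s.card : ℝ≥0∞) * volume (closedBall (0:Xd) (r/2))
      = ∑ y ∈ s, volume (closedBall y (r/2)) := by
        rw [Finset.sum_congr rfl h2, Finset.sum_const, nsmul_eq_mul]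
    _ = volume (⋃ y ∈ s, closedBall y (r/2)) := h1.symm
    _ ≤ volume (closedBall x0 (R+1)) := measure_mono h3

/-- a maximal separated set exists -/
lemma aux_maxsep {E : Set Xd} {x0 : Xd} {R : ℝ} (hER : E ⊆ closedBall x0 R)
    (hne : E.Nonempty) {r : ℝ} (hr : 0 < r) (hr1 : r ≤ 1) :
    ∃ s : Finset Xd, s.Nonempty ∧ ↑s ⊆ E ∧
      (∀ x ∈ s, ∀ y ∈ s, x ≠ y → r < dist x y) ∧
      coverNum E (2*r) ≤ s.card ∧
      (s.card : ℝ≥0∞) * volume (closedBall (0:Xd) (r/2)) ≤ volume (closedBall x0 (R+1)) := by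
  set T : Set ℕ := {n : ℕ | ∃ s : Finset Xd, ↑s ⊆ E ∧
    (∀ x ∈ s, ∀ y ∈ s, x ≠ y → r < dist x y) ∧ s.card = n} with hT
  have h1T : 1 ∈ T := by
    obtain ⟨x, hx⟩ := hne
    exact ⟨{x}, by simpa using hx, by simp, by simp⟩
  have hv0 : volume (closedBall (0:Xd) (r/2)) ≠ 0 :=
    (measure_closedBall_pos volume _ (half_pos hr)).ne'
  have hvt : volume (closedBall (0:Xd) (r/2)) ≠ ⊤ := measure_closedBall_lt_top.ne
  have hVt : volume (closedBall x0 (R+1)) ≠ ⊤ := measure_closedBall_lt_top.ne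
  have hbdd : BddAbove T := by
    refine ⟨Nat.floor ((volume (closedBall x0 (R+1)) / volume (closedBall (0:Xd) (r/2))).toReal), ?_⟩
    rintro n ⟨s, hsE, hsep, rfl⟩
    have := aux_sep_vol hER hr hr1 hsE hsep
    have h4 : (s.card : ℝ≥0∞) ≤ volume (closedBall x0 (R+1)) / volume (closedBall (0:Xd) (r/2)) :=
      (ENNReal.le_div_iff_mul_le (Or.inl hv0) (Or.inl hvt)).2 this
    have h5 : (volume (closedBall x0 (R+1)) / volume (closedBall (0:Xd) (r/2))) ≠ ⊤ :=
      (ENNReal.div_lt_top hVt hv0).ne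
    have h6 := ENNReal.toReal_mono h5 h4
    rw [ENNReal.toReal_natCast] at h6
    exact Nat.le_floor h6
  have hmem := Nat.sSup_mem ⟨1, h1T⟩ hbdd
  obtain ⟨s, hsE, hsep, hcard⟩ := hmem
  have hsne : s.Nonempty := by
    rw [← Finset.card_pos, hcard]
    exact le_csSup hbdd h1T
  have hcover : E ⊆ ⋃ y ∈ s, closedBall y r := by
    by_contra hc
    rw [Set.not_subset] at hc
    obtain ⟨x, hxE, hx⟩ := hc
    simp only [Set.mem_iUnion, mem_closedBall, exists_prop] at hx
    push_neg at hx
    have hxs : x ∉ s := by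
      intro h
      have := hx x h
      simp [dist_self] at this
      linarith
    have hsep' : ∀ a ∈ insert x s, ∀ b ∈ insert x s, a ≠ b → r < dist a b := by
      intro a ha b hb hab
      rcases Finset.mem_insert.1 ha with ha' | ha' <;>
        rcases Finset.mem_insert.1 hb with hb' | hb'
      · exact absurd (ha'.trans hb'.symm) hab
      · subst ha'; exact hx b hb'
      · subst hb'; rw [dist_comm]; exact hx a ha'
      · exact hsep a ha' b hb' hab
    have hmem' : s.card + 1 ∈ T := by
      refine ⟨insert x s, ?_, hsep', by rw [Finset.card_insert_of_notMem hxs]⟩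
      intro z hz
      rcases Finset.mem_insert.1 (by exact_mod_cast hz) with rfl | hz'
      · exact hxE
      · exact hsE hz'
    have := le_csSup hbdd hmem'
    rw [← hcard] at this
    omega
  refine ⟨s, hsne, hsE, hsep, ?_, aux_sep_vol hER hr hr1 hsE hsep⟩
  have hc2 : coverNum E (2*r) ≤ (s.image (fun y => closedBall y r)).card := by
    apply aux_coverNum_le_card
    · intro U hU
      simp only [Finset.mem_image] at hU
      obtain ⟨y, -, rfl⟩ := hU
      refine aux_diam_le (by linarith) fun a ha b hb => ?_
      rw [mem_closedBall] at ha hb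
      have := dist_triangle a y b
      rw [dist_comm y b] at this
      linarith
    · intro x hx
      obtain ⟨y, hy⟩ := by simpa using hcover hx
      simp only [Set.mem_iUnion, Finset.mem_image]
      exact ⟨closedBall y r, ⟨y, hy.1, rfl⟩, hy.2⟩
  exact hc2.trans (Finset.card_image_le)

end euc
section eucC

variable {d : ℕ}

local notation "Xd" => EuclideanSpace ℝ (Fin d)

lemma aux_coverNum_poly {E : Set Xd} (hb : Bornology.IsBounded E) (hne : E.Nonempty) :
    ∃ C : ℝ, 1 ≤ C ∧ ∀ r : ℝ, 0 < r → r ≤ 1 → (coverNum E r : ℝ) ≤ C / r ^ d := by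
  obtain ⟨R, hER⟩ := hb.subset_closedBall (0 : Xd)
  set c1 : ℝ := (volume (closedBall (0:Xd) (1:ℝ))).toReal with hc1
  set Vt : ℝ := (volume (closedBall (0:Xd) (R+1))).toReal with hVt
  have hc1pos : 0 < c1 := by
    rw [hc1]
    exact ENNReal.toReal_pos (measure_closedBall_pos volume _ one_pos).ne'
      measure_closedBall_lt_top.ne
  refine ⟨max 1 (Vt * 4 ^ d / c1), le_max_left _ _, ?_⟩
  intro r hr hr1
  obtain ⟨s, -, -, -, hcov, hvol⟩ := aux_maxsep hER hne (half_pos hr) (by linarith)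
  rw [show 2 * (r / 2) = r by ring] at hcov
  have hvne : volume (closedBall (0:Xd) (r/2/2)) ≠ ⊤ := measure_closedBall_lt_top.ne
  have hVne : volume (closedBall (0:Xd) (R+1)) ≠ ⊤ := measure_closedBall_lt_top.ne
  have hveq : (volume (closedBall (0:Xd) (r/2/2))).toReal = (r/4)^d * c1 := by
    rw [Measure.addHaar_closedBall' volume _ (by linarith : (0:ℝ) ≤ r/2/2)]
    rw [ENNReal.toReal_mul, ENNReal.toReal_ofReal (by positivity), finrank_euclideanSpace_fin]
    rw [hc1, show (r:ℝ)/2/2 = r/4 by ring]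
  have hreal : (s.card : ℝ) * ((r/4)^d * c1) ≤ Vt := by
    have := ENNReal.toReal_mono hVne hvol
    rw [ENNReal.toReal_mul, ENNReal.toReal_natCast, hveq] at this
    exact this
  have hr4 : (0:ℝ) < (r/4)^d * c1 := by positivity
  have hcard : (s.card : ℝ) ≤ Vt / ((r/4)^d * c1) := by
    rw [le_div_iff₀ hr4]; exact hreal
  have h1 : (coverNum E r : ℝ) ≤ (s.card : ℝ) := Nat.cast_le.2 hcov
  have h2 : Vt / ((r/4)^d * c1) = (Vt * 4^d / c1) / r^d := by
    have h4 : ((4:ℝ))^d ≠ 0 := by positivity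
    have hrd : (r:ℝ)^d ≠ 0 := by positivity
    rw [div_pow]
    field_simp
  calc (coverNum E r : ℝ) ≤ Vt / ((r/4)^d * c1) := h1.trans hcard
    _ = (Vt * 4^d / c1) / r^d := h2
    _ ≤ max 1 (Vt * 4^d / c1) / r^d := by
        apply div_le_div_of_nonneg_right (le_max_right _ _) (by positivity)

lemma aux_a_bound {E : Set Xd} (hb : Bornology.IsBounded E) (hne : E.Nonempty) :
    ∃ D : ℝ, 0 ≤ D ∧ ∀ r : ℝ, 0 < r → r ≤ 1/2 →
      Real.log (coverNum E r : ℝ) / (-Real.log r) ≤ D := by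
  obtain ⟨C, hC1, hC⟩ := aux_coverNum_poly hb hne
  have hlogC : 0 ≤ Real.log C := Real.log_nonneg hC1
  have hlog2 : 0 < Real.log 2 := Real.log_pos one_lt_two
  refine ⟨Real.log C / Real.log 2 + d, by positivity, ?_⟩
  intro r hr hr2
  have hlogr : Real.log 2 ≤ -Real.log r := by
    have h := Real.log_le_log hr (by linarith : r ≤ 1/2)
    rw [show (1:ℝ)/2 = 2⁻¹ by norm_num, Real.log_inv] at h
    linarith
  have hlogrpos : 0 < -Real.log r := lt_of_lt_of_le hlog2 hlogr
  have hN1 : (1:ℝ) ≤ (coverNum E r : ℝ) :=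
    Nat.one_le_cast.2 (aux_coverNum_pos hb hne hr)
  have hNC : (coverNum E r : ℝ) ≤ C / r^d := hC r hr (by linarith)
  have hlogN : Real.log (coverNum E r : ℝ) ≤ Real.log C + d * (-Real.log r) := by
    have h := Real.log_le_log (by linarith) hNC
    rw [Real.log_div (by linarith) (by positivity), Real.log_pow] at h
    linarith
  have h0 : 0 ≤ Real.log (coverNum E r : ℝ) := Real.log_nonneg hN1
  rw [div_le_iff₀ hlogrpos]
  have hdiv : Real.log C / Real.log 2 * -Real.log r ≥ Real.log C := by
    rw [ge_iff_le, div_mul_eq_mul_div, le_div_iff₀ hlog2]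
    exact mul_le_mul_of_nonneg_left hlogr hlogC
  have : (Real.log C / Real.log 2 + d) * -Real.log r
      = Real.log C / Real.log 2 * -Real.log r + d * (-Real.log r) := by ring
  rw [this]
  linarith

end eucC
section lemD

lemma aux_prob_one {X : Type*} [TopologicalSpace X] [MeasurableSpace X]
    [SecondCountableTopology X] {E : Set X} {μ : Measure X}
    (h : μ ∈ probOn E) : μ E = 1 := by
  obtain ⟨hp, hs⟩ := h
  haveI := hp
  set S := {V : Set X | IsOpen V ∧ μ V = 0} with hS
  obtain ⟨T, hTc, hTS, hTU⟩ :=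
    TopologicalSpace.isOpen_sUnion_countable S (fun s hs => hs.1)
  have h0 : μ (⋃₀ S) = 0 := by
    rw [← hTU]
    exact (measure_sUnion_null_iff hTc).2 (fun s hsT => (hTS hsT).2)
  have hsub : Eᶜ ⊆ ⋃₀ S := by
    intro x hx
    have hxs : x ∉ msupport μ := fun h => hx (hs h)
    simp only [msupport, Set.mem_setOf_eq] at hxs
    push_neg at hxs
    obtain ⟨U, hUo, hxU, hU0⟩ := hxs
    exact ⟨U, ⟨hUo, hU0⟩, hxU⟩
  have h1 : μ Eᶜ = 0 := measure_mono_null hsub h0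
  have h2 : (1 : ℝ≥0∞) ≤ μ E := by
    have := measure_union_le (μ := μ) E Eᶜ
    rw [Set.union_compl_self, measure_univ, h1, add_zero] at this
    exact this
  exact le_antisymm prob_le_one h2

variable {d : ℕ}

local notation "Xd" => EuclideanSpace ℝ (Fin d)

lemma aux_corrInt_ge {E : Set Xd} (hb : Bornology.IsBounded E) (hne : E.Nonempty)
    {r : ℝ} (hr : 0 < r) {μ : Measure Xd} (hμ : μ ∈ probOn E) :
    (1:ℝ) / (coverNum E r : ℝ) ≤ corrInt μ r := by
  haveI := hμ.1
  obtain ⟨𝒰, hcard, hdiam, hcov⟩ := aux_coverNum_spec hb hr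
  set n := coverNum E r with hn
  have hnpos : 0 < n := aux_coverNum_pos hb hne hr
  set L := 𝒰.toList with hL
  have hLlen : L.length = n := by rw [hL, Finset.length_toList, hcard]
  set f : ℕ → Set Xd := fun i => if h : i < L.length then closure (L.get ⟨i, h⟩) else ∅ with hf
  have hfm : ∀ i, MeasurableSet (f i) := by
    intro i
    rw [hf]
    dsimp only
    split
    · exact isClosed_closure.measurableSet
    · exact MeasurableSet.empty
  have hcov2 : E ⊆ ⋃ i, f i := by
    intro x hx
    obtain ⟨U, hU, hxU⟩ := Set.mem_iUnion₂.1 (hcov hx)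
    have hUL : U ∈ L := (Finset.mem_toList).2 hU
    obtain ⟨i, hgi⟩ := List.mem_iff_get.1 hUL
    refine Set.mem_iUnion.2 ⟨i.1, ?_⟩
    rw [hf]
    dsimp only
    rw [dif_pos i.2]
    have : L.get ⟨i.1, i.2⟩ = U := by rw [Fin.eta]; exact hgi
    rw [this]
    exact subset_closure hxU
  have hsmall : ∀ i, ∀ x ∈ f i, f i ⊆ closedBall x r := by
    intro i x hx y hy
    by_cases h : i < L.length
    · rw [hf] at hx hy
      dsimp only at hx hy
      rw [dif_pos h] at hx hy
      have hdU : EMetric.diam (closure (L.get ⟨i,h⟩)) ≤ ENNReal.ofReal r := by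
        refine le_trans (le_of_eq (Metric.ediam_closure _)) ?_
        exact hdiam _ ((Finset.mem_toList).1 (L.get_mem ⟨i, h⟩))
      have hed : edist y x ≤ ENNReal.ofReal r :=
        le_trans (EMetric.edist_le_diam_of_mem hy hx) hdU
      exact mem_closedBall.2 ((edist_le_ofReal hr.le).1 hed)
    · rw [hf] at hx
      dsimp only at hx
      rw [dif_neg h] at hx
      exact absurd hx (Set.notMem_empty x)
  set W := disjointed f with hW
  have hWm : ∀ i, MeasurableSet (W i) := MeasurableSet.disjointed hfm
  have hWd : Pairwise (Function.onFun Disjoint W) := disjoint_disjointed f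
  have hWf : ∀ i, W i ⊆ f i := disjointed_subset f
  have hsum : (1 : ℝ≥0∞) ≤ ∑' i, μ (W i) := by
    rw [← measure_iUnion hWd hWm, iUnion_disjointed]
    calc (1:ℝ≥0∞) = μ E := (aux_prob_one hμ).symm
      _ ≤ μ (⋃ i, f i) := measure_mono hcov2
  have hWempty : ∀ i, i ∉ Finset.range n → μ (W i) = 0 := by
    intro i hi
    have hni : ¬ i < L.length := by
      rw [hLlen]
      simpa using hi
    have : W i ⊆ (∅ : Set Xd) := by
      refine subset_trans (hWf i) ?_
      rw [hf]
      dsimp only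
      rw [dif_neg hni]
    rw [Set.subset_empty_iff.1 this]
    exact measure_empty
  have hsum2 : (1:ℝ≥0∞) ≤ ∑ i ∈ Finset.range n, μ (W i) := by
    rwa [tsum_eq_sum hWempty] at hsum
  set x : ℕ → ℝ := fun i => (μ (W i)).toReal with hx
  have hfin : ∀ i, μ (W i) ≠ ⊤ := fun i => (measure_lt_top μ _).ne
  have hsumfin : ∑ i ∈ Finset.range n, μ (W i) ≠ ⊤ :=
    (ENNReal.sum_lt_top.2 fun i _ => (hfin i).lt_top).ne
  have hxsum : (1:ℝ) ≤ ∑ i ∈ Finset.range n, x i := by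
    have h1 := ENNReal.toReal_mono hsumfin hsum2
    rwa [ENNReal.toReal_one, ENNReal.toReal_sum (fun i _ => hfin i)] at h1
  have hCS : (1:ℝ)/(n:ℝ) ≤ ∑ i ∈ Finset.range n, x i ^ 2 := by
    have h1 : (∑ i ∈ Finset.range n, x i)^2 ≤ (n:ℝ) * ∑ i ∈ Finset.range n, x i ^ 2 := by
      have := sq_sum_le_card_mul_sum_sq (s := Finset.range n) (f := x)
      simpa using this
    have h2 : (1:ℝ) ≤ (∑ i ∈ Finset.range n, x i)^2 := by nlinarith
    have hnp : (0:ℝ) < (n:ℝ) := Nat.cast_pos.2 hnpos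
    rw [div_le_iff₀ hnp]
    nlinarith
  set g : Xd → ℝ≥0∞ := fun y => μ (closedBall y r) with hg
  have hle : (fun y => ∑ i ∈ Finset.range n, (W i).indicator (fun _ => μ (W i)) y) ≤ g := by
    intro y
    dsimp only
    by_cases hy : ∃ i ∈ Finset.range n, y ∈ W i
    · obtain ⟨i0, hi0, hyi0⟩ := hy
      rw [Finset.sum_eq_single i0]
      · rw [Set.indicator_of_mem hyi0]
        exact measure_mono (subset_trans (hWf i0) (hsmall i0 y (hWf i0 hyi0)))
      · intro j hj hji
        rw [Set.indicator_of_notMem]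
        intro hyj
        exact Set.disjoint_left.1 (hWd hji) hyj hyi0
      · intro h
        exact absurd hi0 h
    · push_neg at hy
      rw [Finset.sum_eq_zero fun i hi => Set.indicator_of_notMem (hy i hi) _]
      exact zero_le
  have hlint : ENNReal.ofReal ((1:ℝ)/(n:ℝ)) ≤ ∫⁻ y, g y ∂μ := by
    have h1 : ∫⁻ y, (∑ i ∈ Finset.range n, (W i).indicator (fun _ => μ (W i)) y) ∂μ
        = ∑ i ∈ Finset.range n, μ (W i) * μ (W i) := by
      rw [lintegral_finset_sum _ (fun i _ => Measurable.indicator measurable_const (hWm i))]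
      exact Finset.sum_congr rfl fun i _ => lintegral_indicator_const (hWm i) _
    have h2 : ∑ i ∈ Finset.range n, μ (W i) * μ (W i)
        = ENNReal.ofReal (∑ i ∈ Finset.range n, x i ^ 2) := by
      rw [ENNReal.ofReal_sum_of_nonneg (fun i _ => sq_nonneg _)]
      refine Finset.sum_congr rfl fun i _ => ?_
      rw [pow_two, ENNReal.ofReal_mul ENNReal.toReal_nonneg]
      rw [hx]
      dsimp only
      rw [ENNReal.ofReal_toReal (hfin i)]
    calc ENNReal.ofReal ((1:ℝ)/(n:ℝ)) ≤ ENNReal.ofReal (∑ i ∈ Finset.range n, x i ^ 2) :=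
          ENNReal.ofReal_le_ofReal hCS
      _ = ∑ i ∈ Finset.range n, μ (W i) * μ (W i) := h2.symm
      _ = ∫⁻ y, (∑ i ∈ Finset.range n, (W i).indicator (fun _ => μ (W i)) y) ∂μ := h1.symm
      _ ≤ ∫⁻ y, g y ∂μ := lintegral_mono hle
  have hfinint : ∫⁻ y, g y ∂μ ≠ ⊤ := by
    have hle1 : ∫⁻ y, g y ∂μ ≤ 1 := by
      calc ∫⁻ y, g y ∂μ ≤ ∫⁻ _, 1 ∂μ := lintegral_mono (fun y => prob_le_one)
        _ = 1 := by simp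
    exact (lt_of_le_of_lt hle1 ENNReal.one_lt_top).ne
  have hmono := ENNReal.toReal_mono hfinint hlint
  rw [ENNReal.toReal_ofReal (by positivity)] at hmono
  exact hmono

end lemD
section lemE

variable {d : ℕ}

local notation "Xd" => EuclideanSpace ℝ (Fin d)

lemma aux_sInf_bounds {E : Set Xd} (hb : Bornology.IsBounded E) (hne : E.Nonempty)
    {r : ℝ} (hr : 0 < r) (hr1 : r ≤ 1) :
    (1:ℝ)/(coverNum E r : ℝ) ≤ sInf ((fun μ => corrInt μ r) '' probOn E) ∧
    sInf ((fun μ => corrInt μ r) '' probOn E) ≤ (1:ℝ)/(coverNum E (2*r) : ℝ) := by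
  obtain ⟨R, hER⟩ := hb.subset_closedBall (0 : Xd)
  obtain ⟨s, hsne, hsE, hsep, hcov, -⟩ := aux_maxsep hER hne hr hr1
  have hcard0 : (s.card : ℝ≥0∞) ≠ 0 := by
    simp [Finset.card_ne_zero_of_mem hsne.choose_spec]
  have hcardt : (s.card : ℝ≥0∞) ≠ ⊤ := ENNReal.natCast_ne_top _
  set μ : Measure Xd := ((s.card : ℝ≥0∞))⁻¹ • ∑ y ∈ s, Measure.dirac y with hμdef
  have happly : ∀ A : Set Xd, MeasurableSet A →
      μ A = (s.card : ℝ≥0∞)⁻¹ * ∑ y ∈ s, A.indicator (1 : Xd → ℝ≥0∞) y := by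
    intro A hA
    rw [hμdef, Measure.smul_apply, smul_eq_mul]
    congr 1
    rw [Measure.finset_sum_apply]
    exact Finset.sum_congr rfl fun y _ => Measure.dirac_apply' y hA
  have hprob : IsProbabilityMeasure μ := by
    constructor
    rw [happly _ MeasurableSet.univ]
    have : ∀ y ∈ s, Set.indicator (Set.univ) (1 : Xd → ℝ≥0∞) y = 1 :=
      fun y _ => Set.indicator_of_mem (Set.mem_univ y) 1
    rw [Finset.sum_congr rfl this, Finset.sum_const, nsmul_eq_mul, mul_one,
      ENNReal.inv_mul_cancel hcard0 hcardt]
  have hsupp : msupport μ ⊆ E := by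
    intro x hx
    by_contra hxE
    have hxs : x ∉ (↑s : Set Xd) := fun h => hxE (hsE h)
    have hopen : IsOpen ((↑s : Set Xd)ᶜ) := (s.finite_toSet.isClosed).isOpen_compl
    have h0 : μ ((↑s : Set Xd)ᶜ) = 0 := by
      rw [happly _ hopen.measurableSet]
      have : ∀ y ∈ s, Set.indicator ((↑s : Set Xd)ᶜ) (1 : Xd → ℝ≥0∞) y = 0 :=
        fun y hy => Set.indicator_of_notMem (by simpa using hy) 1
      rw [Finset.sum_congr rfl this, Finset.sum_const, smul_zero, mul_zero]
    exact hx _ hopen hxs h0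
  have hmem : μ ∈ probOn E := ⟨hprob, hsupp⟩
  have hballs : ∀ y ∈ s, μ (closedBall y r) = (s.card : ℝ≥0∞)⁻¹ := by
    intro y hy
    rw [happly _ measurableSet_closedBall]
    have h1 : ∑ z ∈ s, (closedBall y r).indicator (1 : Xd → ℝ≥0∞) z = 1 := by
      rw [Finset.sum_eq_single y]
      · exact Set.indicator_of_mem (mem_closedBall_self hr.le) 1
      · intro z hz hzy
        apply Set.indicator_of_notMem
        intro hmem'
        have h2 := hsep z hz y hy hzy
        rw [mem_closedBall] at hmem'
        linarith
      · intro h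
        exact absurd hy h
    rw [h1, mul_one]
  have hcorr : corrInt μ r = ((s.card : ℝ))⁻¹ := by
    have hint : ∫⁻ x, μ (closedBall x r) ∂μ = (s.card : ℝ≥0∞)⁻¹ := by
      rw [hμdef]
      rw [lintegral_smul_measure, lintegral_finset_sum_measure]
      have : ∀ y ∈ s, (∫⁻ x, μ (closedBall x r) ∂(Measure.dirac y)) = (s.card : ℝ≥0∞)⁻¹ := by
        intro y hy
        rw [lintegral_dirac]
        exact hballs y hy
      rw [Finset.sum_congr rfl this, Finset.sum_const, nsmul_eq_mul,
        ENNReal.mul_inv_cancel hcard0 hcardt, smul_eq_mul, mul_one]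
    show (∫⁻ x, μ (closedBall x r) ∂μ).toReal = _
    rw [hint, ENNReal.toReal_inv]
    norm_num
  have hbdd : BddBelow ((fun μ => corrInt μ r) '' probOn E) := by
    refine ⟨0, ?_⟩
    rintro y ⟨ν, -, rfl⟩
    exact ENNReal.toReal_nonneg
  have hnonempty : ((fun μ => corrInt μ r) '' probOn E).Nonempty := ⟨_, μ, hmem, rfl⟩
  constructor
  · refine le_csInf hnonempty ?_
    rintro b ⟨ν, hν, rfl⟩
    exact aux_corrInt_ge hb hne hr hν
  · refine le_trans (csInf_le hbdd ⟨μ, hmem, rfl⟩) ?_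
    show corrInt μ r ≤ _
    rw [hcorr]
    have h1 : (0:ℝ) < (coverNum E (2*r) : ℝ) :=
      Nat.cast_pos.2 (aux_coverNum_pos hb hne (by linarith))
    have h2 : (coverNum E (2*r) : ℝ) ≤ (s.card : ℝ) := Nat.cast_le.2 hcov
    rw [inv_eq_one_div]
    exact one_div_le_one_div_of_le h1 h2

end lemE
section lemF

variable {d : ℕ}

local notation "Xd" => EuclideanSpace ℝ (Fin d)

lemma aux_map_two : Filter.map (fun r : ℝ => 2 * r) (𝓝[>] (0:ℝ)) = 𝓝[>] (0:ℝ) := by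
  have hemb : Topology.IsEmbedding (fun r : ℝ => 2 * r) :=
    (Homeomorph.mulLeft₀ (2:ℝ) two_ne_zero).isEmbedding
  have h := hemb.map_nhdsWithin_eq (Ioi 0) 0
  have himg : (fun r : ℝ => 2 * r) '' (Ioi 0) = Ioi 0 := by
    ext y
    constructor
    · rintro ⟨z, hz, rfl⟩
      exact mem_Ioi.2 (mul_pos two_pos (mem_Ioi.1 hz))
    · intro hy
      exact ⟨y/2, mem_Ioi.2 (by linarith [mem_Ioi.1 hy]), by ring⟩
  rw [himg, mul_zero] at h
  exact h

lemma aux_pointwise {E : Set Xd} (hb : Bornology.IsBounded E) (hne : E.Nonempty) :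
    ∃ D : ℝ, 0 ≤ D ∧ ∀ r : ℝ, 0 < r → r < 1/4 →
      0 ≤ Real.log (sInf ((fun μ => corrInt μ r) '' probOn E)) / Real.log r ∧
      Real.log (sInf ((fun μ => corrInt μ r) '' probOn E)) / Real.log r
        ≤ Real.log (coverNum E r : ℝ) / (-Real.log r) ∧
      Real.log (coverNum E r : ℝ) / (-Real.log r) ≤ D ∧
      Real.log (coverNum E (2*r) : ℝ) / (-Real.log (2*r))
        ≤ Real.log (sInf ((fun μ => corrInt μ r) '' probOn E)) / Real.log r
          + D * (Real.log 2 / (-Real.log r)) := by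
  obtain ⟨D, hD0, hD⟩ := aux_a_bound hb hne
  refine ⟨D, hD0, ?_⟩
  intro r hr hr4
  set I := sInf ((fun μ => corrInt μ r) '' probOn E) with hI
  obtain ⟨hI1, hI2⟩ := aux_sInf_bounds hb hne hr (by linarith)
  have hN1pos : 0 < coverNum E r := aux_coverNum_pos hb hne hr
  have hN2pos : 0 < coverNum E (2*r) := aux_coverNum_pos hb hne (by linarith)
  have hN1R : (1:ℝ) ≤ (coverNum E r : ℝ) := Nat.one_le_cast.2 hN1pos
  have hN2R : (1:ℝ) ≤ (coverNum E (2*r) : ℝ) := Nat.one_le_cast.2 hN2pos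
  have hIpos : (0:ℝ) < I := lt_of_lt_of_le (by positivity) hI1
  have hlogr_neg : Real.log r < 0 := Real.log_neg hr (by linarith)
  have htpos : (0:ℝ) < -Real.log r := by linarith
  have hL1 : (0:ℝ) ≤ Real.log (coverNum E r : ℝ) := Real.log_nonneg hN1R
  have hL2 : (0:ℝ) ≤ Real.log (coverNum E (2*r) : ℝ) := Real.log_nonneg hN2R
  have hlogI_lb : -Real.log (coverNum E r : ℝ) ≤ Real.log I := by
    have h := Real.log_le_log (by positivity) hI1
    rwa [one_div, Real.log_inv] at h
  have hlogI_ub : Real.log I ≤ -Real.log (coverNum E (2*r) : ℝ) := by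
    have h := Real.log_le_log hIpos hI2
    rwa [one_div, Real.log_inv] at h
  have hFeq : Real.log I / Real.log r = (-Real.log I) / (-Real.log r) := by
    rw [neg_div_neg_eq]
  have hF_lb2 : Real.log (coverNum E (2*r) : ℝ) / (-Real.log r) ≤ Real.log I / Real.log r := by
    rw [hFeq]
    exact (div_le_div_iff_of_pos_right htpos).2 (by linarith)
  have hF_ub : Real.log I / Real.log r ≤ Real.log (coverNum E r : ℝ) / (-Real.log r) := by
    rw [hFeq]
    exact (div_le_div_iff_of_pos_right htpos).2 (by linarith)
  have hF0 : 0 ≤ Real.log I / Real.log r :=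
    le_trans (by positivity) hF_lb2
  refine ⟨hF0, hF_ub, hD r hr (by linarith), ?_⟩
  have hlog2pos : (0:ℝ) < Real.log 2 := Real.log_pos one_lt_two
  have ht2 : -Real.log (2*r) = -Real.log r - Real.log 2 := by
    rw [Real.log_mul two_ne_zero hr.ne']
    ring
  have htcpos : (0:ℝ) < -Real.log r - Real.log 2 := by
    rw [← ht2]
    have : Real.log (2*r) < 0 := Real.log_neg (by linarith) (by linarith)
    linarith
  have ha2D : Real.log (coverNum E (2*r) : ℝ) / (-Real.log (2*r)) ≤ D :=
    hD (2*r) (by linarith) (by linarith)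
  rw [ht2] at ha2D ⊢
  set t := -Real.log r with htdef
  set c := Real.log 2 with hcdef
  set L := Real.log (coverNum E (2*r) : ℝ) with hLdef
  have e1 : L/(t-c) - L/t = (L/(t-c)) * (c/t) := by
    field_simp
    ring
  have e2 : (L/(t-c)) * (c/t) ≤ D * (c/t) :=
    mul_le_mul_of_nonneg_right ha2D (by positivity)
  have e3 : L/t ≤ Real.log I / Real.log r := hF_lb2
  linarith

end lemF
section final

variable {d : ℕ}

local notation "Xd" => EuclideanSpace ℝ (Fin d)

lemma aux_final {E : Set Xd} (hb : Bornology.IsBounded E) (hne : E.Nonempty) :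
    liminf (fun r : ℝ => Real.log (coverNum E r : ℝ) / (-Real.log r)) (𝓝[>] 0)
      = liminf (fun r : ℝ =>
        Real.log (sInf ((fun μ => corrInt μ r) '' probOn E)) / Real.log r) (𝓝[>] 0) ∧
    limsup (fun r : ℝ => Real.log (coverNum E r : ℝ) / (-Real.log r)) (𝓝[>] 0)
      = limsup (fun r : ℝ =>
        Real.log (sInf ((fun μ => corrInt μ r) '' probOn E)) / Real.log r) (𝓝[>] 0) := by
  set l : Filter ℝ := 𝓝[>] (0:ℝ) with hl
  set a : ℝ → ℝ := fun r => Real.log (coverNum E r : ℝ) / (-Real.log r) with ha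
  set F : ℝ → ℝ := fun r =>
    Real.log (sInf ((fun μ => corrInt μ r) '' probOn E)) / Real.log r with hF
  obtain ⟨D, hD0, hP⟩ := aux_pointwise hb hne
  have hev : ∀ᶠ r in l, 0 < r ∧ r < 1/4 := by
    have h : Ioo (0:ℝ) (1/4) ∈ l := Ioo_mem_nhdsGT_of_mem (by norm_num)
    filter_upwards [h] with r hr using ⟨hr.1, hr.2⟩
  have hev0F : ∀ᶠ r in l, 0 ≤ F r := by
    filter_upwards [hev] with r hr using (hP r hr.1 hr.2).1
  have hevFa : ∀ᶠ r in l, F r ≤ a r := by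
    filter_upwards [hev] with r hr using (hP r hr.1 hr.2).2.1
  have hevaD : ∀ᶠ r in l, a r ≤ D := by
    filter_upwards [hev] with r hr using (hP r hr.1 hr.2).2.2.1
  have hev0a : ∀ᶠ r in l, 0 ≤ a r := by
    filter_upwards [hev0F, hevFa] with r h1 h2 using le_trans h1 h2
  have hevFD : ∀ᶠ r in l, F r ≤ D := by
    filter_upwards [hevFa, hevaD] with r h1 h2 using le_trans h1 h2
  have hev2 : ∀ᶠ r in l, a (2*r) ≤ F r + D * (Real.log 2 / (-Real.log r)) := by
    filter_upwards [hev] with r hr using (hP r hr.1 hr.2).2.2.2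
  have htend : Tendsto (fun r : ℝ => D * (Real.log 2 / (-Real.log r))) l (𝓝 0) := by
    have h1 : Tendsto (fun r : ℝ => -Real.log r) l atTop := by
      rw [hl]
      exact tendsto_neg_atTop_iff.2 Real.tendsto_log_nhdsGT_zero
    have h2 : Tendsto (fun r : ℝ => Real.log 2 / (-Real.log r)) l (𝓝 0) :=
      Tendsto.div_atTop tendsto_const_nhds h1
    have h3 := h2.const_mul D
    simpa using h3
  have heps : ∀ ε : ℝ, 0 < ε → ∀ᶠ r in l, a (2*r) ≤ F r + ε := by
    intro ε hε
    have h1 : ∀ᶠ r in l, D * (Real.log 2 / (-Real.log r)) ≤ ε :=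
      htend.eventually_le_const hε
    filter_upwards [hev2, h1] with r h2 h3 using le_trans h2 (by linarith)
  -- boundedness facts
  haveI : l.NeBot := by rw [hl]; infer_instance
  have bddF_le : IsBoundedUnder (· ≤ ·) l F := isBoundedUnder_of_eventually_le hevFD
  have bddF_ge : IsBoundedUnder (· ≥ ·) l F := isBoundedUnder_of_eventually_ge hev0F
  have cobF_le : IsCoboundedUnder (· ≤ ·) l F := bddF_ge.isCoboundedUnder_le
  have cobF_ge : IsCoboundedUnder (· ≥ ·) l F := bddF_le.isCoboundedUnder_ge
  have bdda_le : IsBoundedUnder (· ≤ ·) l a := isBoundedUnder_of_eventually_le hevaD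
  have bdda_ge : IsBoundedUnder (· ≥ ·) l a := isBoundedUnder_of_eventually_ge hev0a
  -- pull back eventual facts for a ∘ (2 * ·)
  have hmapev : ∀ {p : ℝ → Prop}, (∀ᶠ y in l, p y) → (∀ᶠ r in l, p (2*r)) := by
    intro p hp
    have h1 : ∀ᶠ y in Filter.map (fun r : ℝ => 2*r) l, p y := by
      rw [hl, aux_map_two]
      exact hp
    exact Filter.eventually_map.1 h1
  have bdda2_le : IsBoundedUnder (· ≤ ·) l (fun r => a (2*r)) :=
    isBoundedUnder_of_eventually_le (hmapev hevaD)
  have bdda2_ge : IsBoundedUnder (· ≥ ·) l (fun r => a (2*r)) :=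
    isBoundedUnder_of_eventually_ge (hmapev hev0a)
  have hcomp_limsup : limsup a l = limsup (fun r => a (2*r)) l := by
    conv_lhs => rw [hl, ← aux_map_two]
    rw [← Filter.limsup_comp]
    rfl
  have hcomp_liminf : liminf a l = liminf (fun r => a (2*r)) l := by
    conv_lhs => rw [hl, ← aux_map_two]
    rw [← Filter.liminf_comp]
    rfl
  constructor
  · -- liminf
    apply le_antisymm
    · -- liminf a ≤ liminf F
      refine le_of_forall_pos_le_add ?_
      intro ε hε
      rw [hcomp_liminf]
      have h1 : liminf (fun r => a (2*r)) l ≤ liminf (fun r => F r + ε) l := by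
        have hb' : ∀ᶠ r in l, F r + ε ≤ D + ε := by
          filter_upwards [hevFD] with r h using by linarith
        exact liminf_le_liminf (heps ε hε) bdda2_ge
          ((isBoundedUnder_of_eventually_le hb').isCoboundedUnder_ge)
      have h2 : liminf (fun r => F r + ε) l = liminf F l + ε :=
        liminf_add_const l F ε cobF_ge bddF_ge
      linarith [h1, h2.le]
    · exact liminf_le_liminf hevFa bddF_ge (bdda_le.isCoboundedUnder_ge)
  · -- limsup
    apply le_antisymm
    · refine le_of_forall_pos_le_add ?_
      intro ε hε
      rw [hcomp_limsup]
      have h1 : limsup (fun r => a (2*r)) l ≤ limsup (fun r => F r + ε) l := by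
        have hb' : ∀ᶠ r in l, F r + ε ≤ D + ε := by
          filter_upwards [hevFD] with r h using by linarith
        exact limsup_le_limsup (heps ε hε) (bdda2_ge.isCoboundedUnder_le)
          (isBoundedUnder_of_eventually_le hb')
      have h2 : limsup (fun r => F r + ε) l = limsup F l + ε :=
        limsup_add_const l F ε bddF_le cobF_le
      linarith [h1, h2.le]
    · exact limsup_le_limsup hevFa cobF_le bdda_le

end final

theorem stmt4 {d : ℕ} (E : Set (EuclideanSpace ℝ (Fin d)))
    (hb : Bornology.IsBounded E) (hne : E.Nonempty) (hE : MeasurableSet E) :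
    lbd E = liminf (fun r : ℝ =>
        Real.log (sInf ((fun μ => corrInt μ r) '' probOn E)) / Real.log r) (𝓝[>] 0) ∧
    ubd E = limsup (fun r : ℝ =>
        Real.log (sInf ((fun μ => corrInt μ r) '' probOn E)) / Real.log r) (𝓝[>] 0) := by
  constructor
  · exact (aux_final hb hne).1
  · exact (aux_final hb hne).2
end
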